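/- arXiv:1605.05223 — 15 statements merged into one kernel-verified Lean document; each statement's English description precedes it below -/
import Mathlib

section
/- For any node split, the objective satisfies 0 ≤ J ≤ 1. -/
/-- Lemma 1 (first part): for any node split the objective satisfies `0 ≤ J ≤ 1`. -/
theorem objective_mem_unit_interval (k : ℕ) (hk : 2 ≤ k)
    (π P : Fin k → ℝ) (β J : ℝ)
    (hπ : ∀ i, 0 ≤ π i) (hπs : ∑ i, π i = 1)
    (hP0 : ∀ i, 0 ≤ P i) (hP1 : ∀ i, P i ≤ 1)
    (hβ : β = ∑ i, π i * P i)
    (hJ : J = 2 * ∑ i, π i * |β - P i|) :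
    0 ≤ J ∧ J ≤ 1 := by
  have hβ0 : 0 ≤ β := by
    rw [hβ]; exact Finset.sum_nonneg fun i _ => mul_nonneg (hπ i) (hP0 i)
  have hβ1 : β ≤ 1 := by
    rw [hβ, ← hπs]
    exact Finset.sum_le_sum fun i _ => mul_le_of_le_one_right (hπ i) (hP1 i)
  constructor
  · rw [hJ]
    have : (0:ℝ) ≤ ∑ i, π i * |β - P i| :=
      Finset.sum_nonneg fun i _ => mul_nonneg (hπ i) (abs_nonneg _)
    linarith
  · rw [hJ]
    have key : ∑ i, π i * |β - P i| ≤ ∑ i, π i * (β * (1 - P i) + (1 - β) * P i) := by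
      refine Finset.sum_le_sum fun i _ => mul_le_mul_of_nonneg_left ?_ (hπ i)
      rcases abs_cases (β - P i) with ⟨h, _⟩ | ⟨h, _⟩ <;> rw [h] <;>
        nlinarith [hP0 i, hP1 i]
    have expand : ∑ i, π i * (β * (1 - P i) + (1 - β) * P i)
        = β * ∑ i, π i + (1 - 2 * β) * ∑ i, π i * P i := by
      rw [Finset.mul_sum, Finset.mul_sum, ← Finset.sum_add_distrib]
      exact Finset.sum_congr rfl fun i _ => by ring
    rw [expand, hπs, ← hβ] at key
    nlinarith [sq_nonneg (2 * β - 1)]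
end

section
/- For any node split, J = 1 if and only if the split is maximally pure and maximally balanced, i.e. J = 1 ↔ (α = 0 ∧ β = 1/2). -/
lemma min_abs_half (P : ℝ) : min P (1 - P) = 1/2 - |1/2 - P| := by
  rcases le_total P (1/2) with h | h
  · rw [abs_of_nonneg (by linarith), min_eq_left (by linarith)]; ring
  · rw [abs_of_nonpos (by linarith), min_eq_right (by linarith)]; ring

/-- Lemma 1 (second part): `J = 1` iff the split is maximally pure and maximally balanced. -/
theorem objective_eq_one_iff_pure_balanced (k : ℕ) (hk : 2 ≤ k)
    (π P : Fin k → ℝ) (β α J : ℝ)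
    (hπ : ∀ i, 0 ≤ π i) (hπs : ∑ i, π i = 1)
    (hP0 : ∀ i, 0 ≤ P i) (hP1 : ∀ i, P i ≤ 1)
    (hβ : β = ∑ i, π i * P i)
    (hα : α = ∑ i, π i * min (P i) (1 - P i))
    (hJ : J = 2 * ∑ i, π i * |β - P i|) :
    J = 1 ↔ (α = 0 ∧ β = 1/2) := by
  have main : β = 1/2 → J = 1 - 2 * α := by
    intro hb
    subst hb
    have hS : ∑ i, π i * |(1:ℝ)/2 - P i| = (∑ i, π i) * (1/2) - α := by
      rw [hα, Finset.sum_mul, ← Finset.sum_sub_distrib]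
      apply Finset.sum_congr rfl
      intro i _
      rw [min_abs_half (P i)]; ring
    rw [hJ, hS, hπs]; ring
  constructor
  · intro hJ1
    have hSval : ∑ i, π i * |β - P i| = 1/2 := by linarith [hJ]
    have hsum : ∑ i, π i * (β + P i - 2*β*P i) =
        β * (∑ i, π i) + (1 - 2*β) * ∑ i, π i * P i := by
      rw [Finset.mul_sum, Finset.mul_sum, ← Finset.sum_add_distrib]
      apply Finset.sum_congr rfl
      intro i _; ring
    have hle : ∑ i, π i * |β - P i| ≤ ∑ i, π i * (β + P i - 2*β*P i) := by
      apply Finset.sum_le_sum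
      intro i _
      apply mul_le_mul_of_nonneg_left _ (hπ i)
      have hβ0 : 0 ≤ β := by
        rw [hβ]; exact Finset.sum_nonneg fun i _ => mul_nonneg (hπ i) (hP0 i)
      have hβ1 : β ≤ 1 := by
        rw [hβ, ← hπs]
        exact Finset.sum_le_sum fun i _ => by nlinarith [hπ i, hP1 i]
      rcases abs_cases (β - P i) with ⟨h1, _⟩ | ⟨h1, _⟩ <;> nlinarith [hP0 i, hP1 i]
    rw [hsum, hπs, ← hβ] at hle
    have hb2 : (β - 1/2)^2 ≤ 0 := by nlinarith
    have hb : β = 1/2 := by nlinarith [sq_nonneg (β - 1/2)]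
    have hJα := main hb
    exact ⟨by linarith, hb⟩
  · rintro ⟨ha, hb⟩
    rw [main hb, ha]; ring
end

section
/- For any node split, the balancing factor satisfies (1 - Real.sqrt (1 - J))/2 ≤ β ≤ (1 + Real.sqrt (1 - J))/2; equivalently, J ≤ 4β(1-β). -/
/-- Lemma 2: the balancing factor lies in `[(1-√(1-J))/2, (1+√(1-J))/2]`;
equivalently `J ≤ 4β(1-β)`. -/
theorem balancing_factor_interval (k : ℕ) (hk : 2 ≤ k)
    (π P : Fin k → ℝ) (β J : ℝ)
    (hπ : ∀ i, 0 ≤ π i) (hπs : ∑ i, π i = 1)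
    (hP0 : ∀ i, 0 ≤ P i) (hP1 : ∀ i, P i ≤ 1)
    (hβ : β = ∑ i, π i * P i)
    (hJ : J = 2 * ∑ i, π i * |β - P i|) :
    ((1 - Real.sqrt (1 - J)) / 2 ≤ β ∧ β ≤ (1 + Real.sqrt (1 - J)) / 2)
      ∧ J ≤ 4 * β * (1 - β) := by
  have hβ0 : 0 ≤ β := by
    rw [hβ]
    exact Finset.sum_nonneg fun i _ => mul_nonneg (hπ i) (hP0 i)
  have hβ1 : β ≤ 1 := by
    rw [hβ, ← hπs]
    exact Finset.sum_le_sum fun i _ => by nlinarith [hπ i, hP1 i]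
  set S := Finset.univ.filter (fun i : Fin k => β ≤ P i) with hSdef
  have hmemS : ∀ i ∈ S, β ≤ P i := fun i hi => (Finset.mem_filter.mp hi).2
  have hmemSc : ∀ i ∈ Sᶜ, P i ≤ β := by
    intro i hi
    have := Finset.mem_compl.mp hi
    have : ¬ β ≤ P i := by
      intro h; exact this (Finset.mem_filter.mpr ⟨Finset.mem_univ i, h⟩)
    linarith
  set A := ∑ i ∈ S, π i * (P i - β) with hA
  set B := ∑ i ∈ Sᶜ, π i * (β - P i) with hB
  have habs : ∑ i, π i * |β - P i| = A + B := by
    rw [← Finset.sum_add_sum_compl S (fun i => π i * |β - P i|)]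
    congr 1
    · exact Finset.sum_congr rfl fun i hi => by
        rw [abs_of_nonpos (by linarith [hmemS i hi])]; ring
    · exact Finset.sum_congr rfl fun i hi => by
        rw [abs_of_nonneg (by linarith [hmemSc i hi])]
  have hAB : A = B := by
    have h0 : ∑ i, π i * (P i - β) = 0 := by
      have : ∑ i, π i * (P i - β) = (∑ i, π i * P i) - (∑ i, π i) * β := by
        rw [Finset.sum_mul, ← Finset.sum_sub_distrib]
        exact Finset.sum_congr rfl fun i _ => by ring
      rw [this, hπs, ← hβ]; ring
    have hsplit : ∑ i, π i * (P i - β)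
        = A + ∑ i ∈ Sᶜ, π i * (P i - β) :=
      (Finset.sum_add_sum_compl S _).symm
    have hneg : ∑ i ∈ Sᶜ, π i * (P i - β) = -B := by
      rw [hB, ← Finset.sum_neg_distrib]
      exact Finset.sum_congr rfl fun i _ => by ring
    rw [hsplit, hneg] at h0; linarith
  set a := ∑ i ∈ S, π i with ha
  have ha0 : 0 ≤ a := Finset.sum_nonneg fun i _ => hπ i
  have hac : a + ∑ i ∈ Sᶜ, π i = 1 := by
    rw [ha, Finset.sum_add_sum_compl S π, hπs]
  have hac0 : 0 ≤ ∑ i ∈ Sᶜ, π i := Finset.sum_nonneg fun i _ => hπ i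
  have hbound1 : A ≤ a * (1 - β) := by
    rw [hA, ha, Finset.sum_mul]
    exact Finset.sum_le_sum fun i hi => by nlinarith [hπ i, hP1 i]
  have hbound2 : B ≤ (1 - a) * β := by
    have : B ≤ (∑ i ∈ Sᶜ, π i) * β := by
      rw [hB, Finset.sum_mul]
      exact Finset.sum_le_sum fun i hi => by nlinarith [hπ i, hP0 i]
    nlinarith
  have key : J ≤ 4 * β * (1 - β) := by
    have hJ4 : J = 4 * A := by rw [hJ, habs, hAB]; ring
    nlinarith [mul_le_mul_of_nonneg_left hbound1 hβ0,
      mul_le_mul_of_nonneg_left hbound2 (by linarith : (0:ℝ) ≤ 1 - β)]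
  have hsq : |2 * β - 1| ≤ Real.sqrt (1 - J) := by
    have h1 : (2 * β - 1) ^ 2 ≤ 1 - J := by nlinarith
    calc |2 * β - 1| = Real.sqrt ((2 * β - 1) ^ 2) := (Real.sqrt_sq_eq_abs _).symm
      _ ≤ Real.sqrt (1 - J) := Real.sqrt_le_sqrt h1
  obtain ⟨h1, h2⟩ := abs_le.mp hsq
  exact ⟨⟨by linarith, by linarith⟩, key⟩
end

section
/- For any constant C > 2, the weighted leaf modified Gini-entropy satisfies Real.sqrt (C - 1) ≤ ∑ l, w l * G^m (π l) ≤ (t+1) * w * Real.sqrt (k*C - 1). -/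
lemma my_sqrt_add_le (a b : ℝ) (ha : 0 ≤ a) (hb : 0 ≤ b) :
    Real.sqrt (a + b) ≤ Real.sqrt a + Real.sqrt b := by
  have h1 := Real.sq_sqrt ha
  have h2 := Real.sq_sqrt hb
  have h3 := Real.sqrt_nonneg a
  have h4 := Real.sqrt_nonneg b
  rw [show Real.sqrt a + Real.sqrt b
      = Real.sqrt ((Real.sqrt a + Real.sqrt b)^2) from
      (Real.sqrt_sq (by positivity)).symm]
  apply Real.sqrt_le_sqrt
  nlinarith [mul_nonneg h3 h4]

lemma my_sqrt_sum_le {ι : Type*} (s : Finset ι) (f : ι → ℝ) (hf : ∀ i ∈ s, 0 ≤ f i) :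
    Real.sqrt (∑ i ∈ s, f i) ≤ ∑ i ∈ s, Real.sqrt (f i) := by
  classical
  induction s using Finset.induction_on with
  | empty => simp
  | @insert a s' hx ih =>
    rw [Finset.sum_insert hx, Finset.sum_insert hx]
    calc Real.sqrt (f a + ∑ i ∈ s', f i)
        ≤ Real.sqrt (f a) + Real.sqrt (∑ i ∈ s', f i) :=
          my_sqrt_add_le _ _ (hf a (by simp)) (Finset.sum_nonneg fun i hi => hf i (by simp [hi]))
      _ ≤ _ := by
          gcongr
          exact ih fun i hi => hf i (by simp [hi])

/-- Lemma 8: bounds on the weighted leaf modified Gini-entropy `G_t^m`. -/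
theorem modified_gini_criterion_bounds (k t : ℕ) (hk : 2 ≤ k) (ht : 1 ≤ t)
    (C : ℝ) (hC : 2 < C)
    (w : Fin (t+1) → ℝ) (W : ℝ)
    (hw : ∀ l, 0 ≤ w l) (hws : ∑ l, w l = 1) (hW : ∀ l, w l ≤ W)
    (π : Fin (t+1) → Fin k → ℝ)
    (hπ : ∀ l i, 0 ≤ π l i) (hπs : ∀ l, ∑ i, π l i = 1) :
    Real.sqrt (C - 1) ≤ ∑ l, w l * (∑ i, Real.sqrt (π l i * (C - π l i))) ∧
      ∑ l, w l * (∑ i, Real.sqrt (π l i * (C - π l i)))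
        ≤ (t + 1 : ℝ) * W * Real.sqrt ((k : ℝ) * C - 1) := by
  have hπle : ∀ l i, π l i ≤ 1 := by
    intro l i
    have := hπs l
    calc π l i ≤ ∑ j, π l j := Finset.single_le_sum (fun j _ => hπ l j) (Finset.mem_univ i)
      _ = 1 := hπs l
  have hterm : ∀ l i, 0 ≤ π l i * (C - π l i) := by
    intro l i
    have := hπle l i
    have := hπ l i
    nlinarith
  -- key per-leaf bounds
  have hsum_sq_le : ∀ l, ∑ i, (π l i)^2 ≤ 1 := by
    intro l
    calc ∑ i, (π l i)^2 ≤ ∑ i, π l i := by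
          apply Finset.sum_le_sum
          intro i _
          nlinarith [hπ l i, hπle l i]
      _ = 1 := hπs l
  have hsum_eq : ∀ l, ∑ i, π l i * (C - π l i) = C - ∑ i, (π l i)^2 := by
    intro l
    have : ∑ i, π l i * (C - π l i) = C * (∑ i, π l i) - ∑ i, (π l i)^2 := by
      rw [Finset.mul_sum, ← Finset.sum_sub_distrib]
      congr 1; ext i; ring
    rw [this, hπs l]; ring
  have hlow : ∀ l, Real.sqrt (C - 1) ≤ ∑ i, Real.sqrt (π l i * (C - π l i)) := by
    intro l
    calc Real.sqrt (C - 1) ≤ Real.sqrt (∑ i, π l i * (C - π l i)) := by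
          apply Real.sqrt_le_sqrt
          rw [hsum_eq l]
          linarith [hsum_sq_le l]
      _ ≤ ∑ i, Real.sqrt (π l i * (C - π l i)) :=
          my_sqrt_sum_le _ _ (fun i _ => hterm l i)
  have hhigh : ∀ l, ∑ i, Real.sqrt (π l i * (C - π l i)) ≤ Real.sqrt ((k : ℝ) * C - 1) := by
    intro l
    have hcs : (∑ i, Real.sqrt (π l i * (C - π l i)))^2
        ≤ (k : ℝ) * ∑ i, π l i * (C - π l i) := by
      have := sq_sum_le_card_mul_sum_sq (s := (Finset.univ : Finset (Fin k)))
        (f := fun i => Real.sqrt (π l i * (C - π l i)))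
      simpa [Real.sq_sqrt (hterm l _)] using this
    have h1k : (1 : ℝ) ≤ (k : ℝ) * ∑ i, (π l i)^2 := by
      have := sq_sum_le_card_mul_sum_sq (s := (Finset.univ : Finset (Fin k)))
        (f := fun i => π l i)
      simpa [hπs l] using this
    have hk2 : (k : ℝ) * ∑ i, π l i * (C - π l i) ≤ (k : ℝ) * C - 1 := by
      rw [hsum_eq l]
      have hk0 : (0:ℝ) ≤ k := by positivity
      nlinarith
    have hx : (∑ i, Real.sqrt (π l i * (C - π l i)))^2 ≤ (k : ℝ) * C - 1 :=
      hcs.trans hk2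
    have hnn : 0 ≤ ∑ i, Real.sqrt (π l i * (C - π l i)) :=
      Finset.sum_nonneg fun i _ => Real.sqrt_nonneg _
    calc ∑ i, Real.sqrt (π l i * (C - π l i))
        = Real.sqrt ((∑ i, Real.sqrt (π l i * (C - π l i)))^2) := (Real.sqrt_sq hnn).symm
      _ ≤ Real.sqrt ((k : ℝ) * C - 1) := Real.sqrt_le_sqrt hx
  have hWnn : 0 ≤ W := le_trans (hw 0) (hW 0)
  constructor
  · calc Real.sqrt (C - 1) = ∑ l, w l * Real.sqrt (C - 1) := by
          rw [← Finset.sum_mul, hws, one_mul]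
      _ ≤ ∑ l, w l * (∑ i, Real.sqrt (π l i * (C - π l i))) := by
          apply Finset.sum_le_sum
          intro l _
          exact mul_le_mul_of_nonneg_left (hlow l) (hw l)
  · calc ∑ l, w l * (∑ i, Real.sqrt (π l i * (C - π l i)))
        ≤ ∑ l : Fin (t+1), W * Real.sqrt ((k : ℝ) * C - 1) := by
          apply Finset.sum_le_sum
          intro l _
          have hnn : 0 ≤ ∑ i, Real.sqrt (π l i * (C - π l i)) :=
            Finset.sum_nonneg fun i _ => Real.sqrt_nonneg _
          exact mul_le_mul (hW l) (hhigh l) hnn hWnn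
      _ = (t + 1 : ℝ) * W * Real.sqrt ((k : ℝ) * C - 1) := by
          rw [Finset.sum_const, Finset.card_univ, Fintype.card_fin]
          push_cast
          ring
end

section
/- For any probability vectors p, q on Fin k and any θ ∈ [0,1], the Jensen gap of the Shannon entropy satisfies H((1-θ)•p + θ•q) - (1-θ)*H(p) - θ*H(q) ≥ (1/2) * θ * (1-θ) * (∑ i, |p i - q i|)^2. -/
set_option maxHeartbeats 1000000
open Finset Real

lemma affine_hasDerivAt (a b θ : ℝ) : HasDerivAt (fun t:ℝ => (1-t)*a + t*b) (b - a) θ := by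
  have h0 : (fun t:ℝ => (1-t)*a + t*b) = fun t => (b - a)*t + a := by funext t; ring
  rw [h0]; simpa using ((hasDerivAt_id θ).const_mul (b - a)).add_const a

lemma aux_concave {ι : Type*} (s : Finset ι) (p q : ι → ℝ)
    (hm : ∀ θ ∈ Set.Ioo (0:ℝ) 1, ∀ i ∈ s, 0 < (1-θ)*p i + θ*q i)
    (hsum : ∀ θ ∈ Set.Ioo (0:ℝ) 1, ∑ i ∈ s, ((1-θ)*p i + θ*q i) = 1) :
    ConcaveOn ℝ (Set.Icc (0:ℝ) 1)
      (fun t => (∑ i ∈ s, Real.negMulLog ((1-t)*p i + t*q i))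
        + (∑ i ∈ s, |p i - q i|)^2/2 * t^2) := by
  set c : ℝ := (∑ i ∈ s, |p i - q i|)^2 with hc
  set F : ℝ → ℝ := fun t => ∑ i ∈ s, Real.negMulLog ((1-t)*p i + t*q i) with hF
  set F' : ℝ → ℝ := fun t => ∑ i ∈ s, (-Real.log ((1-t)*p i + t*q i) - 1) * (q i - p i) with hF'
  have hd1 : ∀ θ ∈ Set.Ioo (0:ℝ) 1, HasDerivAt F (F' θ) θ := by
    intro θ hθ
    exact HasDerivAt.fun_sum fun i hi =>
      by have := (Real.hasDerivAt_negMulLog (hm θ hθ i hi).ne').comp θ (affine_hasDerivAt (p i) (q i) θ); exact this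
  have hd2 : ∀ θ ∈ Set.Ioo (0:ℝ) 1,
      HasDerivAt F' (∑ i ∈ s, -((q i - p i)^2 / ((1-θ)*p i + θ*q i))) θ := by
    intro θ hθ
    apply HasDerivAt.fun_sum
    intro i hi
    have h1 := affine_hasDerivAt (p i) (q i) θ
    have h2 := (((h1.log (hm θ hθ i hi).ne').neg.sub_const 1).mul_const (q i - p i))
    convert h2 using 1
    · rfl
    · rfl
    have hne := (hm θ hθ i hi).ne'
    field_simp
  -- G and its derivatives
  set G : ℝ → ℝ := fun t => F t + c/2 * t^2 with hG
  have hdG : ∀ θ ∈ Set.Ioo (0:ℝ) 1, HasDerivAt G (F' θ + c/2 * (2*θ)) θ := by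
    intro θ hθ
    exact (hd1 θ hθ).add (by simpa using ((hasDerivAt_pow 2 θ).const_mul (c/2)))
  have hderivG : ∀ θ ∈ Set.Ioo (0:ℝ) 1, deriv G θ = F' θ + c/2 * (2*θ) :=
    fun θ hθ => (hdG θ hθ).deriv
  have hdG2 : ∀ θ ∈ Set.Ioo (0:ℝ) 1,
      HasDerivAt (fun t => F' t + c/2 * (2*t))
        ((∑ i ∈ s, -((q i - p i)^2 / ((1-θ)*p i + θ*q i))) + c) θ := by
    intro θ hθ
    have : HasDerivAt (fun t:ℝ => c/2 * (2*t)) c θ := by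
      simpa using ((hasDerivAt_id θ).const_mul 2).const_mul (c/2)
    exact (hd2 θ hθ).add this
  have hint : interior (Set.Icc (0:ℝ) 1) = Set.Ioo (0:ℝ) 1 := interior_Icc
  apply concaveOn_of_deriv2_nonpos (convex_Icc 0 1)
  · -- continuity
    apply Continuous.continuousOn
    apply Continuous.add
    · exact continuous_finset_sum s fun i _ => Real.continuous_negMulLog.comp
        (((continuous_const.sub continuous_id).mul continuous_const).add
          (continuous_id.mul continuous_const))
    · exact continuous_const.mul (continuous_pow 2)
  · rw [hint]
    exact fun θ hθ => (hdG θ hθ).differentiableAt.differentiableWithinAt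
  · rw [hint]
    have : Set.EqOn (deriv G) (fun t => F' t + c/2 * (2*t)) (Set.Ioo 0 1) := hderivG
    exact DifferentiableOn.congr
      (fun θ hθ => (hdG2 θ hθ).differentiableAt.differentiableWithinAt) this
  · rw [hint]
    intro θ hθ
    have heq : deriv (deriv G) θ = (∑ i ∈ s, -((q i - p i)^2 / ((1-θ)*p i + θ*q i))) + c := by
      have hev : deriv G =ᶠ[nhds θ] (fun t => F' t + c/2 * (2*t)) :=
        Filter.eventuallyEq_of_mem (isOpen_Ioo.mem_nhds hθ) hderivG
      rw [hev.deriv_eq]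
      exact (hdG2 θ hθ).deriv
    show deriv (deriv G) θ ≤ 0
    rw [heq]
    -- Cauchy-Schwarz
    have hCS : c ≤ ∑ i ∈ s, (q i - p i)^2 / ((1-θ)*p i + θ*q i) := by
      have key := sum_mul_sq_le_sq_mul_sq s
        (fun i => Real.sqrt ((1-θ)*p i + θ*q i))
        (fun i => |q i - p i| / Real.sqrt ((1-θ)*p i + θ*q i))
      have h1 : ∀ i ∈ s, Real.sqrt ((1-θ)*p i + θ*q i) *
          (|q i - p i| / Real.sqrt ((1-θ)*p i + θ*q i)) = |p i - q i| := by
        intro i hi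
        rw [mul_div_cancel₀ _ (Real.sqrt_ne_zero'.mpr (hm θ hθ i hi)), abs_sub_comm]
      have h2 : ∀ i ∈ s, (Real.sqrt ((1-θ)*p i + θ*q i))^2 = (1-θ)*p i + θ*q i := by
        intro i hi; exact Real.sq_sqrt (hm θ hθ i hi).le
      have h3 : ∀ i ∈ s, (|q i - p i| / Real.sqrt ((1-θ)*p i + θ*q i))^2
          = (q i - p i)^2 / ((1-θ)*p i + θ*q i) := by
        intro i hi
        rw [div_pow, sq_abs, Real.sq_sqrt (hm θ hθ i hi).le]
      rw [Finset.sum_congr rfl h1, Finset.sum_congr rfl h2, Finset.sum_congr rfl h3,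
        hsum θ hθ, one_mul] at key
      exact key
    have : ∑ i ∈ s, -((q i - p i)^2 / ((1-θ)*p i + θ*q i))
        = -∑ i ∈ s, (q i - p i)^2 / ((1-θ)*p i + θ*q i) := by
      rw [Finset.sum_neg_distrib]
    rw [this]
    linarith

/-- Lemma 9: the Shannon entropy is strongly concave w.r.t. the `l1`-norm with modulus 1. -/
theorem entropy_strong_concavity (k : ℕ) (hk : 2 ≤ k)
    (p q : Fin k → ℝ) (θ : ℝ)
    (hp : ∀ i, 0 ≤ p i) (hps : ∑ i, p i = 1)
    (hq : ∀ i, 0 ≤ q i) (hqs : ∑ i, q i = 1)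
    (hθ0 : 0 ≤ θ) (hθ1 : θ ≤ 1) :
    (∑ i, ((1 - θ) * p i + θ * q i) * Real.log (1 / ((1 - θ) * p i + θ * q i)))
        - (1 - θ) * (∑ i, p i * Real.log (1 / p i))
        - θ * (∑ i, q i * Real.log (1 / q i))
      ≥ (1/2) * θ * (1 - θ) * (∑ i, |p i - q i|)^2 := by
  classical
  set s : Finset (Fin k) := Finset.univ.filter (fun i => 0 < p i + q i) with hs
  have hoff : ∀ i, i ∉ s → p i = 0 ∧ q i = 0 := by
    intro i hi
    simp only [hs, Finset.mem_filter, Finset.mem_univ, true_and, not_lt] at hi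
    constructor <;> nlinarith [hp i, hq i]
  have hmem : ∀ i ∈ s, 0 < p i + q i := by
    intro i hi
    simpa only [hs, Finset.mem_filter, Finset.mem_univ, true_and] using hi
  have hm : ∀ t ∈ Set.Ioo (0:ℝ) 1, ∀ i ∈ s, 0 < (1-t)*p i + t*q i := by
    intro t ht i hi
    obtain ⟨ht0, ht1⟩ := ht
    nlinarith [mul_pos (mul_pos ht0 (by linarith : (0:ℝ) < 1-t)) (hmem i hi),
      mul_nonneg (mul_nonneg (by linarith : (0:ℝ) ≤ 1-t) (by linarith : (0:ℝ) ≤ 1-t)) (hp i),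
      mul_nonneg (mul_nonneg ht0.le ht0.le) (hq i)]
  have hsum : ∀ t:ℝ, ∑ i ∈ s, ((1-t)*p i + t*q i) = 1 := by
    intro t
    rw [Finset.sum_subset (Finset.subset_univ s)
      (fun i _ hi => by rcases hoff i hi with ⟨h1, h2⟩; rw [h1, h2]; ring),
      Finset.sum_add_distrib, ← Finset.mul_sum, ← Finset.mul_sum, hps, hqs]
    ring
  have hconc := aux_concave s p q hm (fun t _ => hsum t)
  have hrw : ∀ x:ℝ, x * Real.log (1/x) = Real.negMulLog x := by
    intro x; rw [one_div, Real.log_inv, Real.negMulLog]; ring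
  have hHm : (∑ i, ((1-θ)*p i + θ*q i) * Real.log (1/((1-θ)*p i + θ*q i)))
      = ∑ i ∈ s, Real.negMulLog ((1-θ)*p i + θ*q i) := by
    simp_rw [hrw]
    exact (Finset.sum_subset (Finset.subset_univ s)
      (fun i _ hi => by rcases hoff i hi with ⟨h1, h2⟩; rw [show (1-θ)*p i + θ*q i = 0 by rw [h1,h2]; ring]; simp)).symm
  have hHp : (∑ i, p i * Real.log (1/p i)) = ∑ i ∈ s, Real.negMulLog (p i) := by
    simp_rw [hrw]
    exact (Finset.sum_subset (Finset.subset_univ s)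
      (fun i _ hi => by rw [(hoff i hi).1]; simp)).symm
  have hHq : (∑ i, q i * Real.log (1/q i)) = ∑ i ∈ s, Real.negMulLog (q i) := by
    simp_rw [hrw]
    exact (Finset.sum_subset (Finset.subset_univ s)
      (fun i _ hi => by rw [(hoff i hi).2]; simp)).symm
  have hcabs : (∑ i, |p i - q i|) = ∑ i ∈ s, |p i - q i| :=
    (Finset.sum_subset (Finset.subset_univ s)
      (fun i _ hi => by rw [(hoff i hi).1, (hoff i hi).2]; simp)).symm
  have h1θ : 0 ≤ 1 - θ := by linarith
  have key := hconc.2 (Set.mem_Icc.mpr ⟨le_refl 0, zero_le_one⟩)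
    (Set.mem_Icc.mpr ⟨zero_le_one, le_refl 1⟩) h1θ hθ0 (by ring)
  simp only [smul_eq_mul, mul_zero, mul_one, zero_add] at key
  -- key : (1-θ) * G 0 + θ * G 1 ≤ G θ
  norm_num at key
  set c : ℝ := (∑ i ∈ s, |p i - q i|)^2 with hc
  have e0 : ∀ i, (1-(0:ℝ))*p i + 0*q i = p i := fun i => by ring
  have e1 : ∀ i, (1-(1:ℝ))*p i + 1*q i = q i := fun i => by ring
  try simp_rw [e0, e1] at key

  rw [hHm, hHp, hHq, hcabs, ← hc]
  nlinarith [key]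
end

section
/- For any constant C > 2, any probability vectors p, q on Fin k and any θ ∈ [0,1], the Jensen gap of the modified Gini-entropy satisfies G^m((1-θ)•p + θ•q) - (1-θ)*G^m(p) - θ*G^m(q) ≥ ((C-2)^2 / C^3) * θ * (1-θ) * ∑ i, (p i - q i)^2. -/
lemma gini_sq_aux (θ u v K a b : ℝ)
    (ht : θ * (1 - θ) * (a - b)^2 * (2 * ((1-θ)*u+θ*v) * K + K^2 * (θ * (1 - θ) * (a - b)^2))
        ≤ θ * (1 - θ) * (a - b)^2 * 1)
    (hsn : 0 ≤ θ * (1 - θ) * (u - v)^2) :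
    ((1 - θ) * u + θ * v + K * (θ * (1 - θ) * (a - b)^2))^2
      ≤ (1 - θ) * u^2 + θ * v^2 + θ * (1 - θ) * (a - b)^2 := by
  nlinarith [ht, hsn]

lemma gini_point_aux (C : ℝ) (hC : 2 < C) (θ a b : ℝ)
    (ha0 : 0 ≤ a) (ha1 : a ≤ 1) (hb0 : 0 ≤ b) (hb1 : b ≤ 1)
    (hθ0 : 0 ≤ θ) (hθ1 : θ ≤ 1) :
    ((C - 2)^2 / C^3) * θ * (1 - θ) * (a - b)^2 ≤
      Real.sqrt (((1 - θ) * a + θ * b) * (C - ((1 - θ) * a + θ * b)))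
        - (1 - θ) * Real.sqrt (a * (C - a)) - θ * Real.sqrt (b * (C - b)) := by
  have hC0 : (0:ℝ) < C := by linarith
  have h1θ : 0 ≤ 1 - θ := by linarith
  set x : ℝ := (1 - θ) * a + θ * b with hxdef
  have hx0 : 0 ≤ x := by positivity
  have hx1 : x ≤ 1 := by
    have h1 : 0 ≤ (1 - θ) * (1 - a) := mul_nonneg h1θ (by linarith)
    have h2 : 0 ≤ θ * (1 - b) := mul_nonneg hθ0 (by linarith)
    rw [hxdef]; linarith [h1, h2]
  have hXnn : 0 ≤ x * (C - x) := mul_nonneg hx0 (by linarith)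
  have hAnn : 0 ≤ a * (C - a) := mul_nonneg ha0 (by linarith)
  have hBnn : 0 ≤ b * (C - b) := mul_nonneg hb0 (by linarith)
  set K : ℝ := (C - 2)^2 / C^3 with hKdef
  have hK0 : 0 ≤ K := by positivity
  set u : ℝ := Real.sqrt (a * (C - a)) with hudef
  set v : ℝ := Real.sqrt (b * (C - b)) with hvdef
  have hu0 : 0 ≤ u := Real.sqrt_nonneg _
  have hv0 : 0 ≤ v := Real.sqrt_nonneg _
  have hu2 : u ^ 2 = a * (C - a) := Real.sq_sqrt hAnn
  have hv2 : v ^ 2 = b * (C - b) := Real.sq_sqrt hBnn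
  have hC2 : (0:ℝ) ≤ C / 2 := by linarith
  have huC : u ≤ C / 2 := by
    rw [hudef, show C / 2 = Real.sqrt ((C/2)^2) from (Real.sqrt_sq hC2).symm]
    exact Real.sqrt_le_sqrt (by linarith [sq_nonneg (a - C/2)])
  have hvC : v ≤ C / 2 := by
    rw [hvdef, show C / 2 = Real.sqrt ((C/2)^2) from (Real.sqrt_sq hC2).symm]
    exact Real.sqrt_le_sqrt (by linarith [sq_nonneg (b - C/2)])
  have hd0 : 0 ≤ (a - b)^2 := sq_nonneg _
  have hd1 : (a - b)^2 ≤ 1 := by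
    have h1 : 0 ≤ (1 - a + b) * (1 + a - b) :=
      mul_nonneg (by linarith) (by linarith)
    nlinarith [h1]
  have hs0 : 0 ≤ θ * (1 - θ) := mul_nonneg hθ0 h1θ
  have hs1 : θ * (1 - θ) ≤ 1/4 := by linarith [sq_nonneg (θ - 1/2)]
  have hsd0 : 0 ≤ θ * (1 - θ) * (a - b)^2 := mul_nonneg hs0 hd0
  have hsd1 : θ * (1 - θ) * (a - b)^2 ≤ 1/4 := by
    calc θ * (1 - θ) * (a - b)^2 ≤ 1/4 * (a - b)^2 :=
          mul_le_mul_of_nonneg_right hs1 hd0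
      _ ≤ 1/4 := by linarith
  -- the key scalar bound: K*C + K^2/4 ≤ 1
  have h4 : (C - 2)^4 ≤ C^4 :=
    pow_le_pow_left₀ (by linarith : (0:ℝ) ≤ C - 2) (by linarith : C - 2 ≤ C) 4
  have hpoly : (C-2)^2 * C^4 + (C-2)^4 / 4 ≤ C^6 := by
    linarith [h4, mul_pos (pow_pos hC0 4) (show (0:ℝ) < 4*C - 17/4 by linarith)]
  have h6 : (0:ℝ) < C^6 := by positivity
  have hone : K * C + K^2 / 4 ≤ 1 := by
    rw [hKdef]
    have hrw : (C-2)^2/C^3 * C + ((C-2)^2/C^3)^2/4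
        = ((C-2)^2 * C^4 + (C-2)^4/4) / C^6 := by
      field_simp
    rw [hrw, div_le_one h6]
    exact hpoly
  set L : ℝ := (1 - θ) * u + θ * v with hLdef
  have hL0 : 0 ≤ L := by positivity
  have hLC : 2 * L ≤ C := by
    have h1 : 0 ≤ (1 - θ) * (C/2 - u) := mul_nonneg h1θ (by linarith)
    have h2 : 0 ≤ θ * (C/2 - v) := mul_nonneg hθ0 (by linarith)
    rw [hLdef]; linarith [h1, h2]
  have hmain : 2 * L * K + K^2 * (θ * (1 - θ) * (a - b)^2) ≤ 1 := by
    have h1 : 2 * L * K ≤ C * K := mul_le_mul_of_nonneg_right hLC hK0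
    have h2 : K^2 * (θ * (1 - θ) * (a - b)^2) ≤ K^2 * (1/4) :=
      mul_le_mul_of_nonneg_left hsd1 (sq_nonneg K)
    linarith [h1, h2, hone]
  have hR0 : 0 ≤ L + K * (θ * (1 - θ) * (a - b)^2) := by positivity
  have hiden : x * (C - x) = (1 - θ) * u^2 + θ * v^2 + θ * (1 - θ) * (a - b)^2 := by
    rw [hu2, hv2, hxdef]; ring
  have hR2 : (L + K * (θ * (1 - θ) * (a - b)^2))^2 ≤ x * (C - x) := by
    rw [hiden, hLdef]
    have ht : θ * (1 - θ) * (a - b)^2 * (2 * L * K + K^2 * (θ * (1 - θ) * (a - b)^2))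
        ≤ θ * (1 - θ) * (a - b)^2 * 1 := mul_le_mul_of_nonneg_left hmain hsd0
    have hsn : 0 ≤ θ * (1 - θ) * (u - v)^2 := mul_nonneg hs0 (sq_nonneg (u - v))
    rw [hLdef] at ht
    exact gini_sq_aux θ u v K a b ht hsn
  have hRw : L + K * (θ * (1 - θ) * (a - b)^2) ≤ Real.sqrt (x * (C - x)) := by
    have h := Real.sqrt_le_sqrt hR2
    rwa [Real.sqrt_sq hR0] at h
  have hrw2 : ((C - 2)^2 / C^3) * θ * (1 - θ) * (a - b)^2
      = K * (θ * (1 - θ) * (a - b)^2) := by rw [hKdef]; ring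
  rw [hrw2]
  have hLL : (1 - θ) * u + θ * v = L := hLdef.symm
  linarith [hRw]

/-- Lemma 13: the modified Gini-entropy is strongly concave w.r.t. the `l2`-norm
with modulus `2(C-2)^2/C^3`. -/
theorem modified_gini_strong_concavity (k : ℕ) (hk : 2 ≤ k)
    (C : ℝ) (hC : 2 < C)
    (p q : Fin k → ℝ) (θ : ℝ)
    (hp : ∀ i, 0 ≤ p i) (hps : ∑ i, p i = 1)
    (hq : ∀ i, 0 ≤ q i) (hqs : ∑ i, q i = 1)
    (hθ0 : 0 ≤ θ) (hθ1 : θ ≤ 1) :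
    (∑ i, Real.sqrt (((1 - θ) * p i + θ * q i) * (C - ((1 - θ) * p i + θ * q i))))
        - (1 - θ) * (∑ i, Real.sqrt (p i * (C - p i)))
        - θ * (∑ i, Real.sqrt (q i * (C - q i)))
      ≥ ((C - 2)^2 / C^3) * θ * (1 - θ) * ∑ i, (p i - q i)^2 := by
  have hp1 : ∀ i, p i ≤ 1 := by
    intro i
    calc p i ≤ ∑ j, p j := Finset.single_le_sum (fun j _ => hp j) (Finset.mem_univ i)
    _ = 1 := hps
  have hq1 : ∀ i, q i ≤ 1 := by
    intro i
    calc q i ≤ ∑ j, q j := Finset.single_le_sum (fun j _ => hq j) (Finset.mem_univ i)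
    _ = 1 := hqs
  rw [ge_iff_le, Finset.mul_sum, Finset.mul_sum, Finset.mul_sum,
    ← Finset.sum_sub_distrib, ← Finset.sum_sub_distrib]
  exact Finset.sum_le_sum fun i _ =>
    gini_point_aux C hC θ (p i) (q i) (hp i) (hp1 i) (hq i) (hq1 i) hθ0 hθ1
end

section
/- For any real constant C > 2, any a, b ∈ [0,1] and any θ ∈ [0,1], the function g(x) = Real.sqrt (x * (C - x)) satisfies g(θ*a + (1-θ)*b) ≥ θ*g(a) + (1-θ)*g(b) + ((C-2)^2 / C^3) * θ * (1-θ) * (a - b)^2. -/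
set_option maxHeartbeats 1600000 in
/-- Scalar strong-concavity claim from the proof of Lemma 13:
`x ↦ √(x(C-x))` is strongly concave on `[0,1]` with modulus `2(C-2)^2/C^3` when `C > 2`. -/
theorem sqrt_mul_strong_concavity (C a b θ : ℝ) (hC : 2 < C)
    (ha0 : 0 ≤ a) (ha1 : a ≤ 1) (hb0 : 0 ≤ b) (hb1 : b ≤ 1)
    (hθ0 : 0 ≤ θ) (hθ1 : θ ≤ 1) :
    Real.sqrt ((θ * a + (1 - θ) * b) * (C - (θ * a + (1 - θ) * b)))
      ≥ θ * Real.sqrt (a * (C - a)) + (1 - θ) * Real.sqrt (b * (C - b))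
        + ((C - 2)^2 / C^3) * θ * (1 - θ) * (a - b)^2 := by
  have hC0 : (0:ℝ) < C := by linarith
  set s := Real.sqrt (a * (C - a)) with hs
  set t := Real.sqrt (b * (C - b)) with ht
  set k : ℝ := (C - 2)^2 / C^3 with hk
  set m : ℝ := θ * a + (1 - θ) * b with hm
  have ha' : 0 ≤ a * (C - a) := mul_nonneg ha0 (by linarith)
  have hb' : 0 ≤ b * (C - b) := mul_nonneg hb0 (by linarith)
  have hs0 : 0 ≤ s := Real.sqrt_nonneg _
  have ht0 : 0 ≤ t := Real.sqrt_nonneg _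
  have hs2 : s ^ 2 = a * (C - a) := Real.sq_sqrt ha'
  have ht2 : t ^ 2 = b * (C - b) := Real.sq_sqrt hb'
  have hk0 : 0 ≤ k := by positivity
  clear_value s t k m
  have hsle : s ≤ (C + 1) / 2 := by
    nlinarith [hs2, sq_nonneg (C - 1), sq_nonneg (s - (C+1)/2)]
  have htle : t ≤ (C + 1) / 2 := by
    nlinarith [ht2, sq_nonneg (C - 1), sq_nonneg (t - (C+1)/2)]
  have hu0 : 0 ≤ θ * (1 - θ) := mul_nonneg hθ0 (by linarith)
  have hu4 : θ * (1 - θ) ≤ 1/4 := by nlinarith [sq_nonneg (θ - 1/2)]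
  have hd0 : (0:ℝ) ≤ (a - b)^2 := sq_nonneg _
  have hd1 : (a - b)^2 ≤ 1 := by nlinarith
  -- key polynomial inequality
  have hpoly : (C-2)^4 + 4*(C-2)^2*(C+1)*C^3 ≤ 4*C^6 := by
    nlinarith [pow_pos hC0 3, pow_pos hC0 4, sq_nonneg (C-2), sq_nonneg C,
      mul_pos (pow_pos hC0 3) hC0]
  have hk1 : k^2/4 + k*(C+1) ≤ 1 := by
    have hrw : k^2/4 + k*(C+1)
        = ((C-2)^4 + 4*(C-2)^2*(C+1)*C^3) / (4*C^6) := by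
      rw [hk]; field_simp
    rw [hrw, div_le_one (by positivity)]
    exact hpoly
  set u : ℝ := θ * (1 - θ) with hu
  set d : ℝ := (a - b)^2 with hd
  set K : ℝ := k * u * d with hK
  clear_value u d K
  have hK0 : 0 ≤ K := by rw [hK]; exact mul_nonneg (mul_nonneg hk0 hu0) hd0
  have hX0 : 0 ≤ θ * s + (1 - θ) * t :=
    add_nonneg (mul_nonneg hθ0 hs0) (mul_nonneg (by linarith) ht0)
  have hXle : θ * s + (1 - θ) * t ≤ (C + 1) / 2 := by
    have h1 := mul_le_mul_of_nonneg_left hsle hθ0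
    have h2 := mul_le_mul_of_nonneg_left htle (by linarith : (0:ℝ) ≤ 1 - θ)
    linarith
  have hud14 : u * d ≤ 1/4 := by
    have := mul_le_mul hu4 hd1 hd0 (by norm_num)
    linarith
  have hud0 : 0 ≤ u * d := mul_nonneg hu0 hd0
  have hA : k^2 * (u*d) + k * (C+1) ≤ 1 := by
    have h1 : k^2 * (u*d) ≤ k^2 * (1/4) :=
      mul_le_mul_of_nonneg_left hud14 (sq_nonneg k)
    linarith
  have hstep : K^2 + 2*K*(θ * s + (1 - θ) * t) ≤ u * d := by
    have h2 : 2*K*(θ * s + (1 - θ) * t) ≤ K * (C+1) := by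
      have := mul_le_mul_of_nonneg_left hXle (by positivity : (0:ℝ) ≤ 2*K)
      linarith [this]
    have h3 : (u*d) * (k^2 * (u*d) + k * (C+1)) ≤ (u*d) * 1 :=
      mul_le_mul_of_nonneg_left hA hud0
    have h4 : K^2 + K*(C+1) = (u*d) * (k^2 * (u*d) + k * (C+1)) := by
      rw [hK]; ring
    linarith [h2, h3, h4]
  have hRHS0 : 0 ≤ θ * s + (1 - θ) * t + K := by linarith
  have hm' : 0 ≤ m * (C - m) := by
    rw [hm]
    apply mul_nonneg
    · exact add_nonneg (mul_nonneg hθ0 ha0) (mul_nonneg (by linarith) hb0)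
    · nlinarith
  rw [ge_iff_le, show k * θ * (1 - θ) * d = K by rw [hK, hu]; ring]
  rw [Real.le_sqrt hRHS0 hm']
  have hmex : m * (C - m) = θ * s^2 + (1-θ) * t^2 + u * d := by
    rw [hm, hs2, ht2, hu, hd]; ring
  rw [hmex]
  nlinarith [hstep, mul_nonneg hu0 (sq_nonneg (s - t))]
end

section
/- For any node split with 0 < β < 1, the entropy reduction of the split satisfies H(π) - (1-β)*H(π₀) - β*H(π₁) ≥ J^2 / (8 * β * (1 - β)). -/
noncomputable def hFun (t : ℝ) : ℝ := t * Real.log t - t + 1 - 3*(t-1)^2/(2*(t+2))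

noncomputable def hDer (t : ℝ) : ℝ := Real.log t - 3*(t-1)*(t+5)/(2*(t+2)^2)

lemma hFun_hasDerivAt {t : ℝ} (ht : 0 < t) : HasDerivAt hFun (hDer t) t := by
  have ht2 : (2:ℝ)*(t+2) ≠ 0 := by positivity
  have h1 : HasDerivAt (fun t : ℝ => t * Real.log t) (Real.log t + 1) t := by
    have := (hasDerivAt_id' t).mul (Real.hasDerivAt_log ht.ne')
    refine this.congr_deriv (Eq.symm ?_)
    field_simp
  have h2 : HasDerivAt (fun t : ℝ => 3*(t-1)^2/(2*(t+2)))
      ((6*(t-1)*(2*(t+2)) - 3*(t-1)^2*2)/(2*(t+2))^2) t := by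
    have hn : HasDerivAt (fun t : ℝ => 3*(t-1)^2) (6*(t-1)) t := by
      have := ((hasDerivAt_id' t).sub_const 1).pow 2
      refine (this.const_mul 3).congr_deriv (Eq.symm ?_)
      ring
    have hd : HasDerivAt (fun t : ℝ => 2*(t+2)) 2 t := by
      have := ((hasDerivAt_id' t).add_const 2).const_mul 2
      refine this.congr_deriv (Eq.symm ?_)
      ring
    exact hn.div hd ht2
  have := (h1.sub (hasDerivAt_id' t)).add_const 1 |>.sub h2
  refine this.congr_deriv (Eq.symm ?_)
  unfold hDer
  have ht2' : (t+2) ≠ 0 := by positivity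
  field_simp
  ring

lemma hDer_hasDerivAt {t : ℝ} (ht : 0 < t) : HasDerivAt hDer (1/t - 27/(t+2)^3) t := by
  have ht2 : (2:ℝ)*(t+2)^2 ≠ 0 := by positivity
  have h2 : HasDerivAt (fun t : ℝ => 3*(t-1)*(t+5)/(2*(t+2)^2))
      (((3*(t+5)+3*(t-1))*(2*(t+2)^2) - 3*(t-1)*(t+5)*(2*(2*(t+2))))/(2*(t+2)^2)^2) t := by
    have hn : HasDerivAt (fun t : ℝ => 3*(t-1)*(t+5)) (3*(t+5)+3*(t-1)) t := by
      have := (((hasDerivAt_id' t).sub_const 1).const_mul 3).mul ((hasDerivAt_id' t).add_const 5)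
      refine this.congr_deriv (Eq.symm ?_)
      ring
    have hd : HasDerivAt (fun t : ℝ => 2*(t+2)^2) (2*(2*(t+2))) t := by
      have := (((hasDerivAt_id' t).add_const 2).pow 2).const_mul 2
      refine this.congr_deriv (Eq.symm ?_)
      ring
    exact hn.div hd ht2
  have := (Real.hasDerivAt_log ht.ne').sub h2
  refine this.congr_deriv (Eq.symm ?_)
  have ht2' : (t+2) ≠ 0 := by positivity
  field_simp
  ring

lemma hFun_nonneg {t : ℝ} (ht : 0 < t) : 0 ≤ hFun t := by
  -- hDer is monotone on Ioi 0
  have hmono : MonotoneOn hDer (Set.Ioi 0) := by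
    apply monotoneOn_of_deriv_nonneg (convex_Ioi 0)
    · exact fun x hx => (hDer_hasDerivAt hx).continuousAt.continuousWithinAt
    · intro x hx
      rw [interior_Ioi] at hx
      replace hx := Set.mem_Ioi.1 hx
      exact (hDer_hasDerivAt hx).differentiableAt.differentiableWithinAt
    · intro x hx
      rw [interior_Ioi] at hx
      replace hx := Set.mem_Ioi.1 hx
      rw [(hDer_hasDerivAt hx).deriv]
      have h27 : 27 * x ≤ (x+2)^3 := by nlinarith [sq_nonneg (x-1), hx.le]
      have : 27/(x+2)^3 ≤ 1/x := by
        rw [div_le_div_iff₀ (by nlinarith) hx]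
        nlinarith
      linarith
  have hDer1 : hDer 1 = 0 := by simp [hDer]
  -- sign of hDer
  have hsign_le : ∀ x, 0 < x → x ≤ 1 → hDer x ≤ 0 := fun x hx hx1 => by
    have := hmono (Set.mem_Ioi.2 hx) (Set.mem_Ioi.2 one_pos) hx1
    linarith [hDer1 ▸ this]
  have hsign_ge : ∀ x, 1 ≤ x → 0 ≤ hDer x := fun x hx1 => by
    have := hmono (Set.mem_Ioi.2 one_pos) (Set.mem_Ioi.2 (lt_of_lt_of_le one_pos hx1)) hx1
    linarith [hDer1 ▸ this]
  have hFun1 : hFun 1 = 0 := by simp [hFun]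
  rcases le_or_gt t 1 with hle | hgt
  · -- antitone on Ioc 0 1? use Icc... need continuity at endpoints; use [t,1] ⊆ Ioi 0
    have hanti : AntitoneOn hFun (Set.Icc t 1) := by
      apply antitoneOn_of_deriv_nonpos (convex_Icc t 1)
      · exact ContinuousOn.mono (fun x hx => (hFun_hasDerivAt (lt_of_lt_of_le ht hx.1)).continuousAt.continuousWithinAt) (fun x hx => hx)
      · intro x hx
        rw [interior_Icc] at hx
        exact (hFun_hasDerivAt (lt_of_lt_of_le ht hx.1.le)).differentiableAt.differentiableWithinAt
      · intro x hx
        rw [interior_Icc] at hx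
        rw [(hFun_hasDerivAt (lt_of_lt_of_le ht hx.1.le)).deriv]
        exact hsign_le x (lt_of_lt_of_le ht hx.1.le) hx.2.le
    have := hanti (Set.mem_Icc.2 ⟨le_refl t, hle⟩) (Set.mem_Icc.2 ⟨hle, le_refl 1⟩) hle
    linarith [hFun1 ▸ this]
  · have hmono2 : MonotoneOn hFun (Set.Icc 1 t) := by
      apply monotoneOn_of_deriv_nonneg (convex_Icc 1 t)
      · exact ContinuousOn.mono (fun x hx => (hFun_hasDerivAt (lt_of_lt_of_le one_pos hx.1)).continuousAt.continuousWithinAt) (fun x hx => hx)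
      · intro x hx
        rw [interior_Icc] at hx
        exact (hFun_hasDerivAt (lt_of_lt_of_le one_pos hx.1.le)).differentiableAt.differentiableWithinAt
      · intro x hx
        rw [interior_Icc] at hx
        rw [(hFun_hasDerivAt (lt_of_lt_of_le one_pos hx.1.le)).deriv]
        exact hsign_ge x hx.1.le
    have := hmono2 (Set.mem_Icc.2 ⟨le_refl 1, hgt.le⟩) (Set.mem_Icc.2 ⟨hgt.le, le_refl t⟩) hgt.le
    linarith [hFun1 ▸ this]
lemma keyA {x y : ℝ} (hx : 0 ≤ x) (hy : 0 < y) :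
    3*(x-y)^2/(2*(x+2*y)) ≤ x * Real.log (x/y) - x + y := by
  rcases hx.eq_or_lt with rfl | hx
  · simp only [zero_div, Real.log_zero, mul_zero, zero_mul, zero_sub, neg_add_cancel]
    rw [div_le_iff₀ (by positivity)]
    nlinarith
  · have ht : 0 < x / y := div_pos hx hy
    have h0 := hFun_nonneg ht
    unfold hFun at h0
    have hxy : 0 < x + 2*y := by linarith
    have hd : 0 < x/y + 2 := by positivity
    rw [div_le_iff₀ (by positivity)]
    have h1 : 0 ≤ (x/y * Real.log (x/y) - x/y + 1 - 3*(x/y-1)^2/(2*(x/y+2))) * (y * (2*(x+2*y))) := by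
      apply mul_nonneg h0; positivity
    have expand : (x/y * Real.log (x/y) - x/y + 1) * (y*(2*(x+2*y)))
        = (x * Real.log (x/y) - x + y)*(2*(x+2*y)) := by
      field_simp
    rw [sub_mul, expand] at h1
    have key : 3*(x/y-1)^2/(2*(x/y+2)) * (y * (2*(x+2*y))) = 3*(x-y)^2 := by
      rw [div_mul_eq_mul_div, div_eq_iff (by positivity)]
      field_simp
    linarith [key]

lemma term_eq {q p β : ℝ} (hq : 0 ≤ q) (hp0 : 0 ≤ p) (hp1 : p ≤ 1)
    (hβ0 : 0 < β) (hβ1 : β < 1) :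
    q * Real.log (1/q) - (1-β) * (q*(1-p)/(1-β) * Real.log (1/(q*(1-p)/(1-β))))
      - β * (q*p/β * Real.log (1/(q*p/β)))
      = q * (p * Real.log (p/β) + (1-p) * Real.log ((1-p)/(1-β))) := by
  have hβ1' : (1:ℝ) - β ≠ 0 := by linarith
  have hβ0' : β ≠ 0 := ne_of_gt hβ0
  rcases hq.eq_or_lt with rfl | hq
  · simp
  have e1 : (1-β) * (q*(1-p)/(1-β)) = q*(1-p) := by field_simp
  have e2 : β * (q*p/β) = q*p := by field_simp
  rw [show (1-β) * (q*(1-p)/(1-β) * Real.log (1/(q*(1-p)/(1-β))))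
      = q*(1-p) * Real.log (1/(q*(1-p)/(1-β))) from by rw [← mul_assoc, e1],
    show β * (q*p/β * Real.log (1/(q*p/β))) = q*p * Real.log (1/(q*p/β)) from by
      rw [← mul_assoc, e2]]
  have hlogq : Real.log (1/q) = -Real.log q := by rw [one_div, Real.log_inv]
  rcases hp0.eq_or_lt with rfl | hp
  · simp only [mul_zero, zero_div, sub_zero, mul_one, zero_mul, mul_zero]
    have : Real.log (1/(q/(1-β))) = Real.log (1-β) - Real.log q := by
      rw [one_div, Real.log_inv, Real.log_div (ne_of_gt hq) hβ1']
      ring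
    rw [this, hlogq]
    have : Real.log (1/(1-β)) = -Real.log (1-β) := by rw [one_div, Real.log_inv]
    rw [this]; ring
  rcases hp1.eq_or_lt with rfl | hp1
  · simp only [sub_self, zero_div, mul_zero, zero_mul, mul_one]
    have : Real.log (1/(q/β)) = Real.log β - Real.log q := by
      rw [one_div, Real.log_inv, Real.log_div (ne_of_gt hq) hβ0']
      ring
    rw [this, hlogq]
    simp only [Real.log_zero, mul_zero, zero_mul, sub_zero, Real.log_one, one_div]
    rw [Real.log_inv]
    ring
  have h1p : (0:ℝ) < 1 - p := by linarith
  have l0 : Real.log (1/(q*(1-p)/(1-β))) = Real.log (1-β) - Real.log q - Real.log (1-p) := by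
    rw [one_div, Real.log_inv, Real.log_div (by positivity) hβ1',
      Real.log_mul (ne_of_gt hq) (ne_of_gt h1p)]
    ring
  have l1 : Real.log (1/(q*p/β)) = Real.log β - Real.log q - Real.log p := by
    rw [one_div, Real.log_inv, Real.log_div (by positivity) hβ0',
      Real.log_mul (ne_of_gt hq) (ne_of_gt hp)]
    ring
  rw [l0, l1, hlogq, Real.log_div (ne_of_gt hp) hβ0', Real.log_div (ne_of_gt h1p) hβ1']
  ring
/-- Equation (8), first line: the entropy reduction of a split is at least `J²/(8β(1-β))`. -/
theorem entropy_reduction_ge (k : ℕ) (hk : 2 ≤ k)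
    (π P : Fin k → ℝ) (β J : ℝ) (π₀ π₁ : Fin k → ℝ)
    (hπ : ∀ i, 0 ≤ π i) (hπs : ∑ i, π i = 1)
    (hP0 : ∀ i, 0 ≤ P i) (hP1 : ∀ i, P i ≤ 1)
    (hβ : β = ∑ i, π i * P i)
    (hJ : J = 2 * ∑ i, π i * |β - P i|)
    (hβ0 : 0 < β) (hβ1 : β < 1)
    (hπ₀ : ∀ i, π₀ i = π i * (1 - P i) / (1 - β))
    (hπ₁ : ∀ i, π₁ i = π i * P i / β) :
    (∑ i, π i * Real.log (1 / π i))
        - (1 - β) * (∑ i, π₀ i * Real.log (1 / π₀ i))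
        - β * (∑ i, π₁ i * Real.log (1 / π₁ i))
      ≥ J^2 / (8 * β * (1 - β)) := by
  have hβ1' : (0:ℝ) < 1 - β := by linarith
  -- Step 1: rewrite the entropy reduction as a sum of per-class KL terms
  have step1 : (∑ i, π i * Real.log (1 / π i))
        - (1 - β) * (∑ i, π₀ i * Real.log (1 / π₀ i))
        - β * (∑ i, π₁ i * Real.log (1 / π₁ i))
      = ∑ i, π i * (P i * Real.log (P i / β)
          + (1 - P i) * Real.log ((1 - P i) / (1 - β))) := by
    rw [Finset.mul_sum, Finset.mul_sum, ← Finset.sum_sub_distrib, ← Finset.sum_sub_distrib]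
    apply Finset.sum_congr rfl
    intro i _
    rw [hπ₀ i, hπ₁ i]
    exact term_eq (hπ i) (hP0 i) (hP1 i) hβ0 hβ1
  rw [step1, ge_iff_le]
  -- Step 2: pointwise lower bound via keyA
  have step2 : ∀ i, 3*(π i)*(P i - β)^2/(2*(P i + 2*β))
        + 3*(π i)*(P i - β)^2/(2*((1 - P i) + 2*(1 - β)))
      ≤ π i * (P i * Real.log (P i / β) + (1 - P i) * Real.log ((1 - P i) / (1 - β))) := by
    intro i
    have k1 := keyA (hP0 i) hβ0
    have k2 := keyA (x := 1 - P i) (y := 1 - β) (by linarith [hP1 i]) hβ1'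
    have hsum : 3*(P i - β)^2/(2*(P i + 2*β)) + 3*(P i - β)^2/(2*((1 - P i) + 2*(1 - β)))
        ≤ P i * Real.log (P i / β) + (1 - P i) * Real.log ((1 - P i) / (1 - β)) := by
      have e : ((1 - P i) - (1 - β))^2 = (P i - β)^2 := by ring
      rw [e] at k2
      linarith
    calc 3*(π i)*(P i - β)^2/(2*(P i + 2*β))
          + 3*(π i)*(P i - β)^2/(2*((1 - P i) + 2*(1 - β)))
        = π i * (3*(P i - β)^2/(2*(P i + 2*β)) + 3*(P i - β)^2/(2*((1 - P i) + 2*(1 - β)))) := by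
          ring
      _ ≤ _ := mul_le_mul_of_nonneg_left hsum (hπ i)
  have step2' : ∑ i, (3*(π i)*(P i - β)^2/(2*(P i + 2*β))
        + 3*(π i)*(P i - β)^2/(2*((1 - P i) + 2*(1 - β))))
      ≤ ∑ i, π i * (P i * Real.log (P i / β) + (1 - P i) * Real.log ((1 - P i) / (1 - β))) :=
    Finset.sum_le_sum fun i _ => step2 i
  -- Step 3: Cauchy-Schwarz
  have hJ2 : ∑ i, π i * |P i - β| = J / 2 := by
    rw [hJ]
    rw [show (2 * ∑ i, π i * |β - P i|) / 2 = ∑ i, π i * |β - P i| by ring]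
    exact Finset.sum_congr rfl fun i _ => by rw [abs_sub_comm]
  have cs : ∀ (b : Fin k → ℝ), (∀ i, 0 < b i) →
      (∑ i, π i * |P i - β|)^2 ≤ (∑ i, π i * (P i - β)^2 / b i) * (∑ i, π i * b i) := by
    intro b hb
    apply Finset.sum_sq_le_sum_mul_sum_of_sq_eq_mul
    · intro i _
      exact div_nonneg (mul_nonneg (hπ i) (sq_nonneg _)) (hb i).le
    · intro i _
      exact mul_nonneg (hπ i) (hb i).le
    · intro i _
      rw [mul_pow, sq_abs]
      field_simp [(hb i).ne']
  have hb1 : ∀ i, (0:ℝ) < P i + 2*β := fun i => by linarith [hP0 i]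
  have hb2 : ∀ i, (0:ℝ) < (1 - P i) + 2*(1 - β) := fun i => by linarith [hP1 i]
  have hs1 : ∑ i, π i * (P i + 2*β) = 3 * β := by
    have : ∑ i, π i * (P i + 2*β) = (∑ i, π i * P i) + 2*β*(∑ i, π i) := by
      rw [Finset.mul_sum, ← Finset.sum_add_distrib]
      exact Finset.sum_congr rfl fun i _ => by ring
    rw [this, ← hβ, hπs]; ring
  have hs2 : ∑ i, π i * ((1 - P i) + 2*(1 - β)) = 3 * (1 - β) := by
    have : ∑ i, π i * ((1 - P i) + 2*(1 - β)) = (3 - 2*β)*(∑ i, π i) - (∑ i, π i * P i) := by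
      rw [Finset.mul_sum, ← Finset.sum_sub_distrib]
      exact Finset.sum_congr rfl fun i _ => by ring
    rw [this, ← hβ, hπs]; ring
  have cs1 := cs (fun i => P i + 2*β) hb1
  have cs2 := cs (fun i => (1 - P i) + 2*(1 - β)) hb2
  rw [hs1, hJ2] at cs1
  rw [hs2, hJ2] at cs2
  -- extract lower bounds on the two sums
  have S1pos : 0 ≤ ∑ i, π i * (P i - β)^2 / (P i + 2*β) :=
    Finset.sum_nonneg fun i _ => div_nonneg (mul_nonneg (hπ i) (sq_nonneg _)) (hb1 i).le
  have S2pos : 0 ≤ ∑ i, π i * (P i - β)^2 / ((1 - P i) + 2*(1 - β)) :=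
    Finset.sum_nonneg fun i _ => div_nonneg (mul_nonneg (hπ i) (sq_nonneg _)) (hb2 i).le
  have L1 : (J/2)^2 / (3*β) ≤ ∑ i, π i * (P i - β)^2 / (P i + 2*β) := by
    rw [div_le_iff₀ (by positivity)]
    calc (J/2)^2 ≤ (∑ i, π i * (P i - β)^2 / (P i + 2*β)) * (3*β) := cs1
      _ = _ := by ring
  have L2 : (J/2)^2 / (3*(1-β)) ≤ ∑ i, π i * (P i - β)^2 / ((1 - P i) + 2*(1 - β)) := by
    rw [div_le_iff₀ (by positivity)]
    calc (J/2)^2 ≤ (∑ i, π i * (P i - β)^2 / ((1 - P i) + 2*(1 - β))) * (3*(1-β)) := cs2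
      _ = _ := by ring
  -- combine
  have split : ∑ i, (3*(π i)*(P i - β)^2/(2*(P i + 2*β))
        + 3*(π i)*(P i - β)^2/(2*((1 - P i) + 2*(1 - β))))
      = (3/2) * (∑ i, π i * (P i - β)^2 / (P i + 2*β))
        + (3/2) * (∑ i, π i * (P i - β)^2 / ((1 - P i) + 2*(1 - β))) := by
    rw [Finset.mul_sum, Finset.mul_sum, ← Finset.sum_add_distrib]
    apply Finset.sum_congr rfl
    intro i _
    field_simp
  have final : J^2 / (8 * β * (1 - β))
      ≤ (3/2) * (∑ i, π i * (P i - β)^2 / (P i + 2*β))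
        + (3/2) * (∑ i, π i * (P i - β)^2 / ((1 - P i) + 2*(1 - β))) := by
    have e : J^2 / (8 * β * (1 - β)) = (3/2) * ((J/2)^2 / (3*β)) + (3/2) * ((J/2)^2 / (3*(1-β))) := by
      field_simp
      ring
    rw [e]
    have := mul_le_mul_of_nonneg_left L1 (by norm_num : (0:ℝ) ≤ 3/2)
    have := mul_le_mul_of_nonneg_left L2 (by norm_num : (0:ℝ) ≤ 3/2)
    linarith
  calc J^2 / (8 * β * (1 - β)) ≤ _ := final
    _ = _ := split.symm
    _ ≤ _ := step2'
end

section
/- Let γ ∈ (0, 1/2]. For any node split satisfying the weak hypothesis assumption, i.e. γ ≤ β ≤ 1 - γ and J ≥ 2γ, the entropy reduction of the split satisfies H(π) - (1-β)*H(π₀) - β*H(π₁) ≥ γ^2 / (2 * (1 - γ)^2). -/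
open Finset

/-- `log t ≥ 2(t-1)/(t+1)` for `t ≥ 1`. -/
lemma log_lb {t : ℝ} (ht : 1 ≤ t) : 2*(t-1)/(t+1) ≤ Real.log t := by
  set ψ : ℝ → ℝ := fun x => Real.log x - 2*(x-1)/(x+1) with hψ
  have hder : ∀ x : ℝ, 0 < x → HasDerivAt ψ (x⁻¹ - (2*(x+1) - 2*(x-1)*1)/(x+1)^2) x := by
    intro x hx
    have h1 : HasDerivAt (fun y : ℝ => 2*(y-1)) 2 x := by
      simpa using ((hasDerivAt_id x).sub_const 1).const_mul 2
    have h2 : HasDerivAt (fun y : ℝ => y+1) 1 x := (hasDerivAt_id x).add_const 1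
    have h3 : HasDerivAt (fun y : ℝ => 2*(y-1)/(y+1)) ((2*(x+1) - 2*(x-1)*1)/(x+1)^2) x :=
      h1.div h2 (by linarith)
    exact (Real.hasDerivAt_log hx.ne').sub h3
  have hmono : MonotoneOn ψ (Set.Ici 1) := by
    apply monotoneOn_of_deriv_nonneg (convex_Ici 1)
    · intro x hx
      exact ((hder x (by simp at hx; linarith)).differentiableAt).continuousAt.continuousWithinAt
    · intro x hx
      rw [interior_Ici] at hx
      exact ((hder x (by simp at hx; linarith)).differentiableAt).differentiableWithinAt
    · intro x hx
      rw [interior_Ici] at hx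
      have hx1 : (1:ℝ) < x := hx
      rw [(hder x (by linarith)).deriv]
      have h4 : (2*(x+1) - 2*(x-1)*1)/(x+1)^2 ≤ x⁻¹ := by
        rw [div_le_iff₀ (by positivity), inv_mul_eq_div, le_div_iff₀ (by linarith)]
        nlinarith [sq_nonneg (x-1)]
      linarith
  have h0 : ψ 1 = 0 := by simp [hψ]
  have := hmono (Set.mem_Ici.mpr le_rfl) (Set.mem_Ici.mpr ht) ht
  rw [h0] at this
  simp only [hψ] at this
  linarith

/-- `log t ≤ 2(t-1)/(t+1)` for `0 < t ≤ 1`. -/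
lemma log_ub {t : ℝ} (ht0 : 0 < t) (ht : t ≤ 1) : Real.log t ≤ 2*(t-1)/(t+1) := by
  have h1 : (1:ℝ) ≤ 1/t := by rw [le_div_iff₀ ht0]; linarith
  have h2 := log_lb h1
  rw [Real.log_div one_ne_zero ht0.ne', Real.log_one] at h2
  have h3 : 2*(1/t-1)/(1/t+1) = -(2*(t-1)/(t+1)) := by
    field_simp
    ring
  rw [h3] at h2
  linarith

/-- Core single-variable inequality: `t log t - t + 1 ≥ 3(t-1)²/(2(t+2))`. -/
lemma key_ineq {t : ℝ} (ht : 0 < t) :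
    3*(t-1)^2/(2*(t+2)) ≤ t * Real.log t - t + 1 := by
  set φ : ℝ → ℝ := fun x => x * Real.log x - x + 1 - 3*(x-1)^2/(2*(x+2)) with hφ
  have hder : ∀ x : ℝ, 0 < x → HasDerivAt φ
      ((1 * Real.log x + x * x⁻¹) - 1 -
        (3*(2*(x-1))*(2*(x+2)) - 3*(x-1)^2*2)/(2*(x+2))^2) x := by
    intro x hx
    have h1 : HasDerivAt (fun y : ℝ => y * Real.log y) (1 * Real.log x + x * x⁻¹) x :=
      (hasDerivAt_id x).mul (Real.hasDerivAt_log hx.ne')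
    have h2 : HasDerivAt (fun y : ℝ => 3*(y-1)^2) (3*(2*(x-1))) x := by
      have := (((hasDerivAt_id x).sub_const 1).pow 2).const_mul 3
      simpa using this
    have h3 : HasDerivAt (fun y : ℝ => 2*(y+2)) 2 x := by
      simpa using ((hasDerivAt_id x).add_const 2).const_mul 2
    have h4 : HasDerivAt (fun y : ℝ => 3*(y-1)^2/(2*(y+2)))
        ((3*(2*(x-1))*(2*(x+2)) - 3*(x-1)^2*2)/(2*(x+2))^2) x :=
      h2.div h3 (by linarith)
    exact ((h1.sub (hasDerivAt_id x)).add_const 1).sub h4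
  have hderiv_eq : ∀ x : ℝ, 0 < x → deriv φ x =
      Real.log x - (3*(2*(x-1))*(2*(x+2)) - 3*(x-1)^2*2)/(2*(x+2))^2 := by
    intro x hx
    rw [(hder x hx).deriv, mul_inv_cancel₀ hx.ne']
    ring
  have hφ1 : φ 1 = 0 := by simp [hφ]
  have hnonneg : 0 ≤ φ t := by
    rcases le_total 1 t with h | h
    · have hmono : MonotoneOn φ (Set.Ici 1) := by
        apply monotoneOn_of_deriv_nonneg (convex_Ici 1)
        · intro x hx
          have hx0 : (0:ℝ) < x := lt_of_lt_of_le one_pos hx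
          exact ((hder x hx0).differentiableAt).continuousAt.continuousWithinAt
        · intro x hx
          rw [interior_Ici] at hx
          exact ((hder x (lt_trans one_pos hx)).differentiableAt).differentiableWithinAt
        · intro x hx
          rw [interior_Ici] at hx
          have hx1 : (1:ℝ) < x := hx
          rw [hderiv_eq x (by linarith)]
          have hlog := log_lb hx1.le
          have hpoly : (3*(2*(x-1))*(2*(x+2)) - 3*(x-1)^2*2)/(2*(x+2))^2 ≤ 2*(x-1)/(x+1) := by
            rw [div_le_div_iff₀ (by positivity) (by linarith)]
            nlinarith [mul_nonneg (sq_nonneg (x-1)) (by linarith : (0:ℝ) ≤ x - 1)]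
          linarith
      have := hmono (Set.mem_Ici.mpr le_rfl) (Set.mem_Ici.mpr h) h
      rw [hφ1] at this; exact this
    · have hanti : AntitoneOn φ (Set.Icc t 1) := by
        apply antitoneOn_of_deriv_nonpos (convex_Icc t 1)
        · intro x hx
          have hx0 : (0:ℝ) < x := lt_of_lt_of_le ht hx.1
          exact ((hder x hx0).differentiableAt).continuousAt.continuousWithinAt
        · intro x hx
          rw [interior_Icc] at hx
          exact ((hder x (lt_trans ht hx.1)).differentiableAt).differentiableWithinAt
        · intro x hx
          rw [interior_Icc] at hx
          have hx0 : 0 < x := lt_trans ht hx.1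
          have hx1 : x < 1 := hx.2
          rw [hderiv_eq x hx0]
          have hlog := log_ub hx0 hx1.le
          have hpoly : 2*(x-1)/(x+1) ≤ (3*(2*(x-1))*(2*(x+2)) - 3*(x-1)^2*2)/(2*(x+2))^2 := by
            rw [div_le_div_iff₀ (by linarith) (by positivity)]
            nlinarith [mul_nonneg (sq_nonneg (x-1)) (by linarith : (0:ℝ) ≤ 1 - x)]
          linarith
      have := hanti (Set.mem_Icc.mpr ⟨le_rfl, h⟩) (Set.mem_Icc.mpr ⟨h, le_rfl⟩) h
      rw [hφ1] at this; exact this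
  simp only [hφ] at hnonneg
  linarith

/-- Pointwise KL-type bound. -/
lemma pt_bound (a b : ℝ) (ha : 0 ≤ a) (hb : 0 ≤ b) (hab : a ≠ 0 → 0 < b) :
    3*(a-b)^2/(2*(a+2*b)) ≤ a * Real.log (a/b) - a + b := by
  rcases eq_or_lt_of_le ha with h0 | h0
  · rcases eq_or_lt_of_le hb with hb0 | hb0
    · simp [← h0, ← hb0]
    · rw [← h0]
      have e1 : 3*((0:ℝ)-b)^2/(2*(0+2*b)) = 3*b/4 := by
        field_simp [hb0.ne']
        ring
      have e2 : (0:ℝ) * Real.log (0/b) - 0 + b = b := by simp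
      rw [e1, e2]
      linarith
  · have hb0 : 0 < b := hab h0.ne'
    set t := a/b with htdef
    have ht : 0 < t := div_pos h0 hb0
    have hat : a = b * t := by rw [htdef]; field_simp
    have h := key_ineq ht
    have h2 := mul_le_mul_of_nonneg_left h hb0.le
    have e1 : b * (3*(t-1)^2/(2*(t+2))) = 3*(a-b)^2/(2*(a+2*b)) := by
      rw [hat]; field_simp
    have e2 : b * (t * Real.log t - t + 1) = a * Real.log (a/b) - a + b := by
      rw [hat]
      have : b * t / b = t := by field_simp
      rw [this]; ring
    rw [e1, e2] at h2
    exact h2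

/-- Discrete Pinsker inequality. -/
lemma pinsker {k : ℕ} (p q : Fin k → ℝ) (hp : ∀ i, 0 ≤ p i) (hq : ∀ i, 0 ≤ q i)
    (hps : ∑ i, p i = 1) (hqs : ∑ i, q i = 1) (hpq : ∀ i, p i ≠ 0 → 0 < q i) :
    (∑ i, |p i - q i|)^2/2 ≤ ∑ i, p i * Real.log (p i / q i) := by
  have h1 : ∑ i, p i * Real.log (p i/q i)
      = ∑ i, (p i * Real.log (p i/q i) - p i + q i) := by
    rw [Finset.sum_add_distrib, Finset.sum_sub_distrib, hps, hqs]
    ring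
  set W := ∑ i, (p i - q i)^2/(p i + 2*q i) with hW
  have hCS : (∑ i, |p i - q i|)^2 ≤ W * 3 := by
    have := Finset.sum_mul_sq_le_sq_mul_sq Finset.univ
      (fun i => |p i - q i| / Real.sqrt (p i + 2*q i))
      (fun i => Real.sqrt (p i + 2*q i))
    have hfg : ∀ i : Fin k, |p i - q i| / Real.sqrt (p i + 2*q i) * Real.sqrt (p i + 2*q i)
        = |p i - q i| := by
      intro i
      rcases eq_or_lt_of_le (by linarith [hp i, hq i] : (0:ℝ) ≤ p i + 2*q i) with hw | hw
      · have hp0 : p i = 0 := by nlinarith [hp i, hq i]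
        have hq0 : q i = 0 := by nlinarith [hp i, hq i]
        simp [hp0, hq0]
      · exact div_mul_cancel₀ _ (Real.sqrt_ne_zero'.mpr hw)
    have hf2 : ∀ i : Fin k, (|p i - q i| / Real.sqrt (p i + 2*q i))^2
        = (p i - q i)^2/(p i + 2*q i) := by
      intro i
      rw [div_pow, sq_abs, Real.sq_sqrt (by linarith [hp i, hq i])]
    have hg2 : ∑ i, (Real.sqrt (p i + 2*q i))^2 = 3 := by
      have : ∀ i : Fin k, (Real.sqrt (p i + 2*q i))^2 = p i + 2*q i := by
        intro i; exact Real.sq_sqrt (by linarith [hp i, hq i])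
      rw [Finset.sum_congr rfl (fun i _ => this i), Finset.sum_add_distrib, hps,
        ← Finset.mul_sum, hqs]
      ring
    calc (∑ i, |p i - q i|)^2
        = (∑ i, |p i - q i| / Real.sqrt (p i + 2*q i) * Real.sqrt (p i + 2*q i))^2 := by
          rw [Finset.sum_congr rfl (fun i _ => hfg i)]
      _ ≤ (∑ i, (|p i - q i| / Real.sqrt (p i + 2*q i))^2)
            * ∑ i, (Real.sqrt (p i + 2*q i))^2 := this
      _ = W * 3 := by rw [Finset.sum_congr rfl (fun i _ => hf2 i), hg2]
  have h2 : (3:ℝ)/2 * W ≤ ∑ i, (p i * Real.log (p i/q i) - p i + q i) := by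
    have hpt : ∀ i : Fin k, (3:ℝ)/2 * ((p i - q i)^2/(p i + 2*q i))
        ≤ p i * Real.log (p i/q i) - p i + q i := by
      intro i
      have := pt_bound (p i) (q i) (hp i) (hq i) (hpq i)
      have e : 3*(p i - q i)^2/(2*(p i + 2*q i)) = (3:ℝ)/2 * ((p i - q i)^2/(p i + 2*q i)) := by
        rw [div_mul_div_comm]
      linarith [e ▸ this]
    calc (3:ℝ)/2 * W = ∑ i, (3:ℝ)/2 * ((p i - q i)^2/(p i + 2*q i)) := by
          rw [hW, Finset.mul_sum]
      _ ≤ _ := Finset.sum_le_sum (fun i _ => hpt i)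
  rw [h1]
  linarith

/-- Helper: `x log(1/y) - x log(1/x) = x log(x/y)` for `x ≥ 0`, `y > 0`. -/
lemma sub_logs (x y : ℝ) (hx : 0 ≤ x) (hy : 0 < y) :
    x * Real.log (1/y) - x * Real.log (1/x) = x * Real.log (x/y) := by
  rcases eq_or_lt_of_le hx with h0 | h0
  · simp [← h0]
  · rw [one_div, one_div, Real.log_inv, Real.log_inv, Real.log_div h0.ne' hy.ne']
    ring

set_option maxHeartbeats 2000000 in
/-- Equation (8): under the weak hypothesis assumption the entropy
reduction of a split is at least `γ²/(2(1-γ)²)`. -/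
theorem entropy_reduction_weak_hyp (k : ℕ) (hk : 2 ≤ k)
    (γ : ℝ) (hγ0 : 0 < γ) (hγhalf : γ ≤ 1/2)
    (π P : Fin k → ℝ) (β J : ℝ) (π₀ π₁ : Fin k → ℝ)
    (hπ : ∀ i, 0 ≤ π i) (hπs : ∑ i, π i = 1)
    (hP0 : ∀ i, 0 ≤ P i) (hP1 : ∀ i, P i ≤ 1)
    (hβ : β = ∑ i, π i * P i)
    (hJ : J = 2 * ∑ i, π i * |β - P i|)
    (hβlo : γ ≤ β) (hβhi : β ≤ 1 - γ) (hJγ : 2 * γ ≤ J)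
    (hπ₀ : ∀ i, π₀ i = π i * (1 - P i) / (1 - β))
    (hπ₁ : ∀ i, π₁ i = π i * P i / β) :
    (∑ i, π i * Real.log (1 / π i))
        - (1 - β) * (∑ i, π₀ i * Real.log (1 / π₀ i))
        - β * (∑ i, π₁ i * Real.log (1 / π₁ i))
      ≥ γ^2 / (2 * (1 - γ)^2) := by
  have hβ0 : 0 < β := lt_of_lt_of_le hγ0 hβlo
  have hβ1 : β < 1 := by linarith
  have h1β : 0 < 1 - β := by linarith
  -- nonnegativity of children
  have hπ₀n : ∀ i, 0 ≤ π₀ i := fun i => by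
    rw [hπ₀ i]
    exact div_nonneg (mul_nonneg (hπ i) (by linarith [hP1 i])) h1β.le
  have hπ₁n : ∀ i, 0 ≤ π₁ i := fun i => by
    rw [hπ₁ i]
    exact div_nonneg (mul_nonneg (hπ i) (hP0 i)) hβ0.le
  -- sums of children
  have hs0 : ∑ i, π₀ i = 1 := by
    calc ∑ i, π₀ i = ∑ i, (π i - π i * P i)/(1-β) :=
          Finset.sum_congr rfl (fun i _ => by rw [hπ₀ i]; ring)
      _ = (∑ i, (π i - π i * P i))/(1-β) := by rw [Finset.sum_div]
      _ = 1 := by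
          rw [Finset.sum_sub_distrib, hπs, ← hβ]
          field_simp
  have hs1 : ∑ i, π₁ i = 1 := by
    calc ∑ i, π₁ i = ∑ i, (π i * P i)/β :=
          Finset.sum_congr rfl (fun i _ => by rw [hπ₁ i])
      _ = (∑ i, π i * P i)/β := by rw [Finset.sum_div]
      _ = 1 := by rw [← hβ]; field_simp
  -- support conditions
  have hz0 : ∀ i, π₀ i ≠ 0 → 0 < π i := by
    intro i h
    rcases eq_or_lt_of_le (hπ i) with h0 | h0
    · exact absurd (by rw [hπ₀ i, ← h0]; simp) h
    · exact h0
  have hz1 : ∀ i, π₁ i ≠ 0 → 0 < π i := by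
    intro i h
    rcases eq_or_lt_of_le (hπ i) with h0 | h0
    · exact absurd (by rw [hπ₁ i, ← h0]; simp) h
    · exact h0
  -- decomposition
  have hdecomp : ∀ i, π i = (1-β) * π₀ i + β * π₁ i := by
    intro i
    rw [hπ₀ i, hπ₁ i]
    field_simp
    ring
  -- pointwise identity
  have hkey : ∀ i, π i * Real.log (1/π i) - (1-β) * (π₀ i * Real.log (1/π₀ i))
      - β * (π₁ i * Real.log (1/π₁ i))
      = (1-β) * (π₀ i * Real.log (π₀ i/π i)) + β * (π₁ i * Real.log (π₁ i/π i)) := by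
    intro i
    rcases eq_or_lt_of_le (hπ i) with h0 | h0
    · have h00 : π₀ i = 0 := by rw [hπ₀ i, ← h0]; simp
      have h01 : π₁ i = 0 := by rw [hπ₁ i, ← h0]; simp
      simp [← h0, h00, h01]
    · have e1 := sub_logs (π₀ i) (π i) (hπ₀n i) h0
      have e2 := sub_logs (π₁ i) (π i) (hπ₁n i) h0
      linear_combination (1-β) * e1 + β * e2 + Real.log (1/π i) * hdecomp i
  -- sum identity
  have hsum : (∑ i, π i * Real.log (1 / π i))
      - (1 - β) * (∑ i, π₀ i * Real.log (1 / π₀ i))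
      - β * (∑ i, π₁ i * Real.log (1 / π₁ i))
      = (1-β) * (∑ i, π₀ i * Real.log (π₀ i/π i))
        + β * (∑ i, π₁ i * Real.log (π₁ i/π i)) := by
    rw [Finset.mul_sum, Finset.mul_sum, Finset.mul_sum, Finset.mul_sum,
      ← Finset.sum_sub_distrib, ← Finset.sum_sub_distrib, ← Finset.sum_add_distrib]
    exact Finset.sum_congr rfl (fun i _ => hkey i)
  -- total variation computations
  set S := ∑ i, π i * |β - P i| with hS
  have hSJ : J = 2 * S := hJ
  have hSγ : γ ≤ S := by linarith
  have hV0 : ∑ i, |π₀ i - π i| = S / (1-β) := by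
    calc ∑ i, |π₀ i - π i| = ∑ i, (π i * |β - P i|)/(1-β) := by
          apply Finset.sum_congr rfl
          intro i _
          have e : π₀ i - π i = π i * (β - P i) / (1-β) := by
            rw [hπ₀ i]; field_simp; ring
          rw [e, abs_div, abs_of_pos h1β, abs_mul, abs_of_nonneg (hπ i)]
      _ = S / (1-β) := by rw [Finset.sum_div]
  have hV1 : ∑ i, |π₁ i - π i| = S / β := by
    calc ∑ i, |π₁ i - π i| = ∑ i, (π i * |β - P i|)/β := by
          apply Finset.sum_congr rfl
          intro i _
          have e : π₁ i - π i = π i * (P i - β) / β := by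
            rw [hπ₁ i]; field_simp
          rw [e, abs_div, abs_of_pos hβ0, abs_mul, abs_of_nonneg (hπ i), abs_sub_comm]
      _ = S / β := by rw [Finset.sum_div]
  -- Pinsker applied twice
  have hD0 := pinsker π₀ π hπ₀n hπ hs0 hπs hz0
  have hD1 := pinsker π₁ π hπ₁n hπ hs1 hπs hz1
  rw [hV0] at hD0
  rw [hV1] at hD1
  rw [ge_iff_le, hsum]
  have hb1 : (1-β) * ((S/(1-β))^2/2) = S^2/(2*(1-β)) := by
    field_simp
  have hb2 : β * ((S/β)^2/2) = S^2/(2*β) := by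
    field_simp
  have hred : S^2/(2*(1-β)) + S^2/(2*β)
      ≤ (1-β) * (∑ i, π₀ i * Real.log (π₀ i/π i)) + β * (∑ i, π₁ i * Real.log (π₁ i/π i)) := by
    have t0 := mul_le_mul_of_nonneg_left hD0 h1β.le
    have t1 := mul_le_mul_of_nonneg_left hD1 hβ0.le
    rw [hb1] at t0
    rw [hb2] at t1
    linarith
  have hfin : γ^2/(2*(1-γ)^2) ≤ S^2/(2*(1-β)) + S^2/(2*β) := by
    have hS2 : γ^2 ≤ S^2 := by nlinarith
    have hbb : β*(1-β) ≤ (1-γ)^2 := by nlinarith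
    have hd1 : (0:ℝ) < 2*(1-β) := by linarith
    have hd2 : (0:ℝ) < 2*β := by linarith
    have hd3 : (0:ℝ) < 2*(1-γ)^2 := by nlinarith
    rw [div_add_div _ _ hd1.ne' hd2.ne', div_le_div_iff₀ hd3 (mul_pos hd1 hd2)]
    nlinarith [mul_le_mul hS2 hbb (by positivity) (sq_nonneg S)]
  linarith
end

section
/- Let γ ∈ (0, 1/2]. For any node split satisfying the weak hypothesis assumption, i.e. γ ≤ β ≤ 1 - γ and J ≥ 2γ, the Gini-entropy reduction of the split satisfies G^g(π) - (1-β)*G^g(π₀) - β*G^g(π₁) ≥ γ^2 / ((1 - γ)^2 * k). -/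
/-- Under the weak hypothesis assumption the Gini-entropy reduction
of a split is at least `γ²/((1-γ)² k)`. -/
theorem gini_reduction_weak_hyp (k : ℕ) (hk : 2 ≤ k)
    (γ : ℝ) (hγ0 : 0 < γ) (hγhalf : γ ≤ 1/2)
    (π P : Fin k → ℝ) (β J : ℝ) (π₀ π₁ : Fin k → ℝ)
    (hπ : ∀ i, 0 ≤ π i) (hπs : ∑ i, π i = 1)
    (hP0 : ∀ i, 0 ≤ P i) (hP1 : ∀ i, P i ≤ 1)
    (hβ : β = ∑ i, π i * P i)
    (hJ : J = 2 * ∑ i, π i * |β - P i|)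
    (hβlo : γ ≤ β) (hβhi : β ≤ 1 - γ) (hJγ : 2 * γ ≤ J)
    (hπ₀ : ∀ i, π₀ i = π i * (1 - P i) / (1 - β))
    (hπ₁ : ∀ i, π₁ i = π i * P i / β) :
    (∑ i, π i * (1 - π i))
        - (1 - β) * (∑ i, π₀ i * (1 - π₀ i))
        - β * (∑ i, π₁ i * (1 - π₁ i))
      ≥ γ^2 / ((1 - γ)^2 * k) := by
  have hβ0 : 0 < β := lt_of_lt_of_le hγ0 hβlo
  have h1β : 0 < 1 - β := by linarith
  have hkpos : (0:ℝ) < (k:ℝ) := by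
    have : (2:ℝ) ≤ (k:ℝ) := by exact_mod_cast hk
    linarith
  set S := ∑ i, π i ^ 2 * (β - P i) ^ 2 with hS
  have key : (∑ i, π i * (1 - π i))
        - (1 - β) * (∑ i, π₀ i * (1 - π₀ i))
        - β * (∑ i, π₁ i * (1 - π₁ i)) = S / (β * (1 - β)) := by
    rw [hS, Finset.mul_sum, Finset.mul_sum, Finset.sum_div,
      ← Finset.sum_sub_distrib, ← Finset.sum_sub_distrib]
    refine Finset.sum_congr rfl fun i _ => ?_
    rw [hπ₀ i, hπ₁ i]
    field_simp
    ring
  have hCS : (∑ i, π i * |β - P i|)^2 ≤ (k:ℝ) * S := by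
    have h := sq_sum_le_card_mul_sum_sq
      (s := (Finset.univ : Finset (Fin k))) (f := fun i => π i * |β - P i|)
    have heq : ∑ i, (π i * |β - P i|)^2 = S := by
      refine Finset.sum_congr rfl fun i _ => ?_
      rw [mul_pow, sq_abs]
    simpa [Finset.card_univ, heq] using h
  have hsum : γ ≤ ∑ i, π i * |β - P i| := by
    rw [hJ] at hJγ; linarith
  have hγ2 : γ^2 ≤ (k:ℝ) * S := by
    refine le_trans ?_ hCS
    have : 0 ≤ γ := le_of_lt hγ0
    exact pow_le_pow_left₀ this hsum 2
  have hSlb : γ^2 / (k:ℝ) ≤ S := by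
    rw [div_le_iff₀ hkpos]; linarith
  have hS0 : 0 ≤ S := by positivity
  have hden : β * (1 - β) ≤ (1 - γ)^2 := by
    have h1 : β ≤ 1 - γ := hβhi
    have h2 : 1 - β ≤ 1 - γ := by linarith
    have : β * (1 - β) ≤ (1 - γ) * (1 - γ) := by
      apply mul_le_mul h1 h2 (le_of_lt h1β) (by linarith)
    nlinarith [this]
  rw [key, ge_iff_le]
  have h1γ : 0 < (1 - γ)^2 := by nlinarith
  calc γ^2 / ((1 - γ)^2 * (k:ℝ)) = (γ^2 / (k:ℝ)) / ((1 - γ)^2) := by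
        rw [div_div]; ring_nf
    _ ≤ S / (β * (1 - β)) := by
        apply div_le_div₀ hS0 hSlb (by positivity) hden
end

section
/- Let γ ∈ (0, 1/2] and C > 2. For any node split satisfying the weak hypothesis assumption, i.e. γ ≤ β ≤ 1 - γ and J ≥ 2γ, the modified Gini-entropy reduction of the split satisfies G^m(π) - (1-β)*G^m(π₀) - β*G^m(π₁) ≥ ((C-2)^2 * γ^2) / (C^3 * k * (1 - γ)^2). -/
set_option maxHeartbeats 800000

open Finset

lemma gini_sqrt_le {C x : ℝ} (hC : 0 < C) (hx0 : 0 ≤ x) (hx1 : x ≤ 1) :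
    Real.sqrt (x * (C - x)) ≤ Real.sqrt C := by
  apply Real.sqrt_le_sqrt; nlinarith

/-- Pure algebraic core: sharpened Cauchy–Schwarz / Lagrange identity argument. -/
lemma gini_alg (C a b lam gp gb ga s t q : ℝ)
    (hC0 : 0 < C)
    (hgp2 : gp ^ 2 = (lam * b + (1 - lam) * a) * (C - (lam * b + (1 - lam) * a)))
    (hgb2 : gb ^ 2 = b * (C - b)) (hga2 : ga ^ 2 = a * (C - a))
    (hs2 : s ^ 2 = b * (C - a)) (ht2 : t ^ 2 = a * (C - b))
    (hst : gb * ga = s * t)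
    (hgp0 : 0 ≤ gp) (hgb0 : 0 ≤ gb) (hga0 : 0 ≤ ga) (hs0 : 0 ≤ s) (ht0 : 0 ≤ t)
    (hq2 : q ^ 2 = C) (hq0 : 0 < q)
    (hgple : gp ≤ q) (hgble : gb ≤ q) (hgale : ga ≤ q) (hsle : s ≤ q) (htle : t ≤ q)
    (hl0 : 0 ≤ lam) (hl1 : lam ≤ 1) :
    q / 8 * (lam * (1 - lam) * (b - a)^2) ≤ gp - lam * gb - (1 - lam) * ga := by
  obtain ⟨S, hSdef⟩ : ∃ S, S = lam * gb + (1 - lam) * ga := ⟨_, rfl⟩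
  have hl1' : (0:ℝ) ≤ 1 - lam := by linarith
  have hS0 : 0 ≤ S := by
    have := mul_nonneg hl0 hgb0
    have := mul_nonneg hl1' hga0
    rw [hSdef]; linarith
  have hSle : S ≤ q := by
    have h1 := mul_le_mul_of_nonneg_left hgble hl0
    have h2 := mul_le_mul_of_nonneg_left hgale hl1'
    have h3 : lam * q + (1 - lam) * q = q := by ring
    rw [hSdef]; linarith
  -- Lagrange identity
  have hD : gp ^ 2 - S ^ 2 = lam * (1 - lam) * (s - t) ^ 2 := by
    rw [hSdef]
    linear_combination hgp2 - lam^2 * hgb2 - (1-lam)^2 * hga2 - 2*lam*(1-lam)*hst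
      - lam*(1-lam)*hs2 - lam*(1-lam)*ht2
  have hstdiff : s ^ 2 - t ^ 2 = C * (b - a) := by linear_combination hs2 - ht2
  have hsum4C : (s + t) ^ 2 ≤ 4 * C := by nlinarith [hq2]
  have hprodeq : (s - t) ^ 2 * (s + t) ^ 2 = (C * (b - a)) ^ 2 := by
    linear_combination (s^2 - t^2 + C*(b-a)) * hstdiff
  have hDlb : C * (b - a) ^ 2 / 4 ≤ (s - t) ^ 2 := by
    have h1 := mul_le_mul_of_nonneg_left hsum4C (sq_nonneg (s - t))
    nlinarith [hprodeq, hC0]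
  have hS2le : S ^ 2 ≤ gp ^ 2 := by
    have h := mul_nonneg (mul_nonneg hl0 hl1') (sq_nonneg (s - t))
    linarith
  have hgpS : S ≤ gp := le_of_pow_le_pow_left₀ two_ne_zero hgp0 hS2le
  have hmain : lam * (1 - lam) * (C * (b - a) ^ 2 / 4) ≤ (gp - S) * (2 * q) := by
    have h1 : lam * (1 - lam) * (C * (b - a)^2 / 4) ≤ lam * (1 - lam) * (s - t)^2 :=
      mul_le_mul_of_nonneg_left hDlb (mul_nonneg hl0 hl1')
    have h2 : (gp - S) * (gp + S) ≤ (gp - S) * (2 * q) :=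
      mul_le_mul_of_nonneg_left (by linarith) (by linarith)
    have h3 : (gp - S) * (gp + S) = gp ^ 2 - S ^ 2 := by ring
    linarith [hD]
  have hfin : (q / 8 * (lam * (1 - lam) * (b - a)^2)) * (2 * q)
      ≤ (gp - S) * (2 * q) := by
    have he : (q / 8 * (lam * (1 - lam) * (b - a)^2)) * (2 * q)
        = lam * (1 - lam) * ((q ^ 2) * (b - a)^2 / 4) := by ring
    rw [he, hq2]; exact hmain
  have h := le_of_mul_le_mul_right hfin (by positivity : (0:ℝ) < 2 * q)
  rw [hSdef] at h; linarith

lemma gini_pointwise (C : ℝ) (hC : 2 < C) (a b lam : ℝ)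
    (ha0 : 0 ≤ a) (ha1 : a ≤ 1) (hb0 : 0 ≤ b) (hb1 : b ≤ 1)
    (hl0 : 0 ≤ lam) (hl1 : lam ≤ 1) :
    Real.sqrt C / 8 * (lam * (1 - lam) * (b - a)^2) ≤
      Real.sqrt ((lam * b + (1 - lam) * a) * (C - (lam * b + (1 - lam) * a)))
        - lam * Real.sqrt (b * (C - b)) - (1 - lam) * Real.sqrt (a * (C - a)) := by
  have hC0 : (0:ℝ) < C := by linarith
  have hp0 : 0 ≤ lam * b + (1 - lam) * a := by nlinarith
  have hp1 : lam * b + (1 - lam) * a ≤ 1 := by nlinarith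
  refine gini_alg C a b lam _ _ _ (Real.sqrt (b * (C - a))) (Real.sqrt (a * (C - b)))
    (Real.sqrt C) hC0
    (Real.sq_sqrt (by nlinarith)) (Real.sq_sqrt (by nlinarith)) (Real.sq_sqrt (by nlinarith))
    (Real.sq_sqrt (by nlinarith)) (Real.sq_sqrt (by nlinarith))
    ?_ (Real.sqrt_nonneg _) (Real.sqrt_nonneg _) (Real.sqrt_nonneg _)
    (Real.sqrt_nonneg _) (Real.sqrt_nonneg _)
    (Real.sq_sqrt hC0.le) (Real.sqrt_pos.mpr hC0)
    (gini_sqrt_le hC0 hp0 hp1) (gini_sqrt_le hC0 hb0 hb1) (gini_sqrt_le hC0 ha0 ha1)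
    (Real.sqrt_le_sqrt (by nlinarith)) (Real.sqrt_le_sqrt (by nlinarith)) hl0 hl1
  rw [← Real.sqrt_mul (mul_nonneg hb0 (by linarith : (0:ℝ) ≤ C - b)),
      ← Real.sqrt_mul (mul_nonneg hb0 (by linarith : (0:ℝ) ≤ C - a))]
  congr 1; ring

lemma gini_aux_poly (C : ℝ) (hC : 2 < C) : 8 * (C - 2)^2 ≤ Real.sqrt C * C^3 := by
  have h1 : (1:ℝ) ≤ Real.sqrt C := by
    rw [show (1:ℝ) = Real.sqrt 1 by simp]
    exact Real.sqrt_le_sqrt (by linarith)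
  have h2 : 8 * (C - 2)^2 ≤ C^3 := by
    nlinarith [mul_nonneg (by linarith : (0:ℝ) ≤ C - 2) (sq_nonneg (C - 3))]
  nlinarith [pow_pos (by linarith : (0:ℝ) < C) 3]

/-- Equation (9): under the weak hypothesis assumption the modified Gini-entropy
reduction of a split is at least `(C-2)²γ²/(C³ k (1-γ)²)`. -/
theorem modified_gini_reduction_weak_hyp (k : ℕ) (hk : 2 ≤ k)
    (C : ℝ) (hC : 2 < C)
    (γ : ℝ) (hγ0 : 0 < γ) (hγhalf : γ ≤ 1/2)
    (π P : Fin k → ℝ) (β J : ℝ) (π₀ π₁ : Fin k → ℝ)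
    (hπ : ∀ i, 0 ≤ π i) (hπs : ∑ i, π i = 1)
    (hP0 : ∀ i, 0 ≤ P i) (hP1 : ∀ i, P i ≤ 1)
    (hβ : β = ∑ i, π i * P i)
    (hJ : J = 2 * ∑ i, π i * |β - P i|)
    (hβlo : γ ≤ β) (hβhi : β ≤ 1 - γ) (hJγ : 2 * γ ≤ J)
    (hπ₀ : ∀ i, π₀ i = π i * (1 - P i) / (1 - β))
    (hπ₁ : ∀ i, π₁ i = π i * P i / β) :
    (∑ i, Real.sqrt (π i * (C - π i)))
        - (1 - β) * (∑ i, Real.sqrt (π₀ i * (C - π₀ i)))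
        - β * (∑ i, Real.sqrt (π₁ i * (C - π₁ i)))
      ≥ ((C - 2)^2 * γ^2) / (C^3 * k * (1 - γ)^2) := by
  have hC0 : (0:ℝ) < C := by linarith
  have hk0 : (0:ℝ) < (k:ℝ) := Nat.cast_pos.mpr (by omega)
  have hβ0 : 0 < β := lt_of_lt_of_le hγ0 hβlo
  have h1β : 0 < 1 - β := by linarith
  have hγ1 : γ < 1 := by linarith
  -- child distributions sum to 1, hence lie in [0,1]
  have hsum1 : ∑ i, π₁ i = 1 := by
    simp only [hπ₁]
    rw [← Finset.sum_div, ← hβ, div_self hβ0.ne']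
  have hsum0 : ∑ i, π₀ i = 1 := by
    simp only [hπ₀]
    rw [← Finset.sum_div]
    have h : ∑ i, π i * (1 - P i) = (∑ i, π i) - ∑ i, π i * P i := by
      rw [← Finset.sum_sub_distrib]
      exact Finset.sum_congr rfl fun i _ => by ring
    rw [h, hπs, ← hβ, div_self h1β.ne']
  have hπ₀0 : ∀ i, 0 ≤ π₀ i := fun i => by
    rw [hπ₀ i]
    exact div_nonneg (mul_nonneg (hπ i) (by linarith [hP1 i])) h1β.le
  have hπ₁0 : ∀ i, 0 ≤ π₁ i := fun i => by
    rw [hπ₁ i]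
    exact div_nonneg (mul_nonneg (hπ i) (hP0 i)) hβ0.le
  have hπ1 : ∀ i, π i ≤ 1 := fun i =>
    hπs ▸ Finset.single_le_sum (fun j _ => hπ j) (Finset.mem_univ i)
  have hπ₀1 : ∀ i, π₀ i ≤ 1 := fun i =>
    hsum0 ▸ Finset.single_le_sum (fun j _ => hπ₀0 j) (Finset.mem_univ i)
  have hπ₁1 : ∀ i, π₁ i ≤ 1 := fun i =>
    hsum1 ▸ Finset.single_le_sum (fun j _ => hπ₁0 j) (Finset.mem_univ i)
  have hcomb : ∀ i, β * π₁ i + (1 - β) * π₀ i = π i := fun i => by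
    rw [hπ₀ i, hπ₁ i]
    field_simp
    ring
  -- pointwise strong-concavity bound
  have hpt : ∀ i, Real.sqrt C / 8 * (β * (1 - β) * (π₁ i - π₀ i)^2)
      ≤ Real.sqrt (π i * (C - π i)) - β * Real.sqrt (π₁ i * (C - π₁ i))
        - (1 - β) * Real.sqrt (π₀ i * (C - π₀ i)) := fun i => by
    have h := gini_pointwise C hC (π₀ i) (π₁ i) β (hπ₀0 i) (hπ₀1 i) (hπ₁0 i) (hπ₁1 i)
      hβ0.le (by linarith)
    rw [hcomb i] at h
    exact h
  -- rewrite each summand in terms of π i * |β - P i|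
  have hsq : ∀ i, Real.sqrt C / 8 * (β * (1 - β) * (π₁ i - π₀ i)^2)
      = Real.sqrt C / (8 * (β * (1 - β))) * (π i * |β - P i|)^2 := fun i => by
    have habs : (π i * |β - P i|)^2 = (π i)^2 * (β - P i)^2 := by
      rw [mul_pow, sq_abs]
    rw [habs, hπ₀ i, hπ₁ i]
    field_simp
    ring
  -- sum the pointwise bounds
  have hsumle : ∑ i, Real.sqrt C / (8 * (β * (1 - β))) * (π i * |β - P i|)^2
      ≤ (∑ i, Real.sqrt (π i * (C - π i)))
        - (1 - β) * (∑ i, Real.sqrt (π₀ i * (C - π₀ i)))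
        - β * (∑ i, Real.sqrt (π₁ i * (C - π₁ i))) := by
    have h1 : ∑ i, Real.sqrt C / (8 * (β * (1 - β))) * (π i * |β - P i|)^2
        ≤ ∑ i, (Real.sqrt (π i * (C - π i)) - β * Real.sqrt (π₁ i * (C - π₁ i))
            - (1 - β) * Real.sqrt (π₀ i * (C - π₀ i))) := by
      apply Finset.sum_le_sum
      intro i _
      rw [← hsq i]
      exact hpt i
    have h2 : ∑ i, (Real.sqrt (π i * (C - π i)) - β * Real.sqrt (π₁ i * (C - π₁ i))
          - (1 - β) * Real.sqrt (π₀ i * (C - π₀ i)))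
        = (∑ i, Real.sqrt (π i * (C - π i)))
          - (1 - β) * (∑ i, Real.sqrt (π₀ i * (C - π₀ i)))
          - β * (∑ i, Real.sqrt (π₁ i * (C - π₁ i))) := by
      rw [Finset.sum_sub_distrib, Finset.sum_sub_distrib, ← Finset.mul_sum, ← Finset.mul_sum]
      ring
    linarith [h1, h2 ▸ h1]
  -- Cauchy–Schwarz lower bound on the quadratic sum
  have hCS : γ^2 ≤ (k:ℝ) * ∑ i, (π i * |β - P i|)^2 := by
    have h1 : (∑ i, π i * |β - P i|)^2 ≤ (k:ℝ) * ∑ i, (π i * |β - P i|)^2 := by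
      have := sq_sum_le_card_mul_sum_sq (s := (Finset.univ : Finset (Fin k)))
        (f := fun i => π i * |β - P i|)
      simpa using this
    have h2 : γ ≤ ∑ i, π i * |β - P i| := by
      rw [hJ] at hJγ; linarith
    nlinarith [h2, hγ0.le]
  have hA : γ^2 / (k:ℝ) ≤ ∑ i, (π i * |β - P i|)^2 := by
    rw [div_le_iff₀ hk0]; nlinarith [hCS]
  -- combine
  have hcpos : 0 < Real.sqrt C / (8 * (β * (1 - β))) := by positivity
  have hchain : Real.sqrt C / (8 * (β * (1 - β))) * (γ^2 / (k:ℝ))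
      ≤ ∑ i, Real.sqrt C / (8 * (β * (1 - β))) * (π i * |β - P i|)^2 := by
    rw [← Finset.mul_sum]
    exact mul_le_mul_of_nonneg_left hA hcpos.le
  -- final constant comparison
  have hb1 : β * (1 - β) ≤ (1 - γ)^2 := by nlinarith
  have haux := gini_aux_poly C hC
  have hkey : ((C - 2)^2 * γ^2) / (C^3 * k * (1 - γ)^2)
      ≤ Real.sqrt C / (8 * (β * (1 - β))) * (γ^2 / (k:ℝ)) := by
    have hd1 : (0:ℝ) < C^3 * k * (1 - γ)^2 :=
      mul_pos (mul_pos (pow_pos hC0 3) hk0) (pow_pos (by linarith) 2)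
    have hd2 : (0:ℝ) < 8 * (β * (1 - β)) * k := by positivity
    rw [div_mul_div_comm, div_le_div_iff₀ hd1 hd2]
    have h1 : 8 * (C - 2)^2 * (β * (1 - β)) ≤ (Real.sqrt C * C^3) * (1 - γ)^2 :=
      mul_le_mul haux hb1 (by positivity) (by positivity)
    have h2 := mul_le_mul_of_nonneg_left h1 (mul_nonneg (sq_nonneg γ) hk0.le)
    nlinarith [h2]
  linarith [hsumle, hchain, hkey]
end

section
/- Let η be a real number with 0 < η and η^2 ≤ 32, and let G : ℕ → ℝ satisfy G t ≥ 0 for all t ≥ 1 and G (t+1) ≤ G t * (1 - η^2 / (16 * (t+1))) for all t ≥ 1. Then for every integer s ≥ 1, G (2^s) ≤ G 1 * Real.exp (-(η^2) * s / 32). -/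
/-- Equation (10): dyadic recurrence bound. -/
theorem dyadic_recurrence_bound (η : ℝ) (hη : 0 < η) (hη32 : η^2 ≤ 32)
    (G : ℕ → ℝ)
    (hG0 : ∀ t : ℕ, 1 ≤ t → 0 ≤ G t)
    (hrec : ∀ t : ℕ, 1 ≤ t → G (t+1) ≤ G t * (1 - η^2 / (16 * ((t : ℝ) + 1))))
    (s : ℕ) (hs : 1 ≤ s) :
    G (2^s) ≤ G 1 * Real.exp (-(η^2) * s / 32) := by
  have hη2 : 0 < η ^ 2 := by positivity
  -- key block lemma
  have block : ∀ n : ℕ, 1 ≤ n → ∀ k : ℕ, k ≤ n →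
      G (n + k) ≤ G n * Real.exp (-(η^2) * k / (32 * n)) := by
    intro n hn k
    induction k with
    | zero => intro _; simp
    | succ k ih =>
      intro hk1
      have hk : k ≤ n := Nat.le_of_succ_le hk1
      have ihk := ih hk
      have hnpos : (0:ℝ) < n := by exact_mod_cast hn
      have hk0 : (0:ℝ) ≤ (k:ℝ) := Nat.cast_nonneg k
      have hnk1 : (1:ℝ) ≤ (n:ℝ) + k + 1 := by linarith
      have hfac0 : 0 ≤ 1 - η^2 / (16 * ((n:ℝ) + k + 1)) := by
        have h2 : (2:ℝ) ≤ (n:ℝ) + k + 1 := by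
          have : (1:ℝ) ≤ (n:ℝ) := by exact_mod_cast hn
          linarith
        have : η^2 / (16 * ((n:ℝ) + k + 1)) ≤ 32 / (16 * 2) := by
          gcongr <;> nlinarith
        linarith [this]
      have hfac_le : 1 - η^2 / (16 * ((n:ℝ) + k + 1)) ≤
          Real.exp (-(η^2) / (32 * n)) := by
        have h1 : 1 - η^2 / (16 * ((n:ℝ) + k + 1)) ≤
            Real.exp (-(η^2 / (16 * ((n:ℝ) + k + 1)))) := by
          have := Real.add_one_le_exp (-(η^2 / (16 * ((n:ℝ) + k + 1))))
          linarith
        refine h1.trans (Real.exp_le_exp.mpr ?_)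
        have hkn : (n:ℝ) + k + 1 ≤ 2 * n := by
          have : (k:ℝ) + 1 ≤ (n:ℝ) := by exact_mod_cast hk1
          linarith
        have hdd : η^2 / (32 * (n:ℝ)) ≤ η^2 / (16 * ((n:ℝ) + k + 1)) := by
          rw [div_le_div_iff₀ (by positivity) (by positivity)]
          nlinarith
        have h2 := neg_le_neg hdd
        simpa [neg_div] using h2
      have hrecn := hrec (n + k) (le_trans hn (Nat.le_add_right n k))
      have hcast : ((n + k : ℕ) : ℝ) = (n:ℝ) + k := by push_cast; ring
      rw [hcast] at hrecn
      have hGnk : 0 ≤ G (n + k) := hG0 _ (le_trans hn (Nat.le_add_right n k))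
      have hGn : 0 ≤ G n := hG0 n hn
      push_cast
      calc G (n + (k+1)) = G ((n + k) + 1) := by ring_nf
        _ ≤ G (n + k) * (1 - η^2 / (16 * ((n:ℝ) + k + 1))) := hrecn
        _ ≤ (G n * Real.exp (-(η^2) * k / (32 * n))) *
              (1 - η^2 / (16 * ((n:ℝ) + k + 1))) :=
            mul_le_mul_of_nonneg_right ihk hfac0
        _ ≤ (G n * Real.exp (-(η^2) * k / (32 * n))) *
              Real.exp (-(η^2) / (32 * n)) :=
            mul_le_mul_of_nonneg_left hfac_le (by positivity)
        _ = G n * Real.exp (-(η^2) * (k+1) / (32 * n)) := by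
            rw [mul_assoc, ← Real.exp_add]; congr 1; ring
  -- doubling lemma
  have dbl : ∀ n : ℕ, 1 ≤ n → G (2 * n) ≤ G n * Real.exp (-(η^2) / 32) := by
    intro n hn
    have := block n hn n le_rfl
    have hnpos : (0:ℝ) < n := by exact_mod_cast hn
    have he : -(η^2) * n / (32 * n) = -(η^2) / 32 := by
      field_simp
    rw [he] at this
    calc G (2 * n) = G (n + n) := by ring_nf
      _ ≤ _ := this
  -- main induction on s
  induction s with
  | zero => omega
  | succ s ih =>
    rcases Nat.eq_or_lt_of_le hs with h1 | h1
    · -- s + 1 = 1, i.e. s = 0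
      have hs0 : s = 0 := by omega
      subst hs0
      have := dbl 1 le_rfl
      simpa using this
    · have hs' : 1 ≤ s := by omega
      have ihs := ih hs'
      have h2s : 1 ≤ 2 ^ s := Nat.one_le_two_pow
      have hdbl := dbl (2 ^ s) h2s
      have hGe : 0 ≤ Real.exp (-(η^2) / 32) := (Real.exp_pos _).le
      push_cast
      calc G (2 ^ (s+1)) = G (2 * 2 ^ s) := by rw [pow_succ]; ring_nf
        _ ≤ G (2 ^ s) * Real.exp (-(η^2) / 32) := hdbl
        _ ≤ (G 1 * Real.exp (-(η^2) * s / 32)) * Real.exp (-(η^2) / 32) :=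
            mul_le_mul_of_nonneg_right ihs hGe
        _ = G 1 * Real.exp (-(η^2) * (s+1) / 32) := by
            rw [mul_assoc, ← Real.exp_add]; congr 1; ring
end

section
/- (Theorem 1, boosting for the entropy criterion, in the form established by the paper's proof.) Fix an integer k ≥ 2 and γ ∈ (0, 1/2], and set η^2 = 8*γ^2 / ((1-γ)^2 * Real.log k). Let G : ℕ → ℝ satisfy G t ≥ 0 for all t ≥ 1, G 1 ≤ 2 * Real.log k, and G (t+1) ≤ G t * (1 - η^2 / (16 * (t+1))) for all t ≥ 1. Then for every α ∈ (0, 2 * Real.log k] and every t ≥ 1 such that t+1 is a power of 2 and t ≥ (2 * Real.log k / α) ^ (4 * (1-γ)^2 * Real.log k / (γ^2 * Real.logb 2 (Real.exp 1))), one has G t ≤ α. -/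
noncomputable def Hsum (t : ℕ) : ℝ := ∑ s ∈ Finset.Icc 2 t, (1 : ℝ) / s

lemma Hsum_succ (t : ℕ) (ht : 1 ≤ t) :
    Hsum (t+1) = Hsum t + 1 / ((t:ℝ)+1) := by
  unfold Hsum
  rw [Finset.sum_Icc_succ_top (by omega : 2 ≤ t + 1)]
  push_cast
  ring

lemma Hsum_one : Hsum 1 = 0 := by
  unfold Hsum
  rw [Finset.Icc_eq_empty (by omega)]
  simp

lemma log_le_Hsum : ∀ t : ℕ, 1 ≤ t →
    Real.log t / (2 * Real.log 2) ≤ Hsum t := by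
  have l2 : (0:ℝ) < Real.log 2 := Real.log_pos (by norm_num)
  have l2d : (0.6931471803 : ℝ) < Real.log 2 := Real.log_two_gt_d9
  -- base case at 3
  have h3 : Real.log 3 / (2 * Real.log 2) ≤ Hsum 3 := by
    have h27 : Real.log 27 ≤ Real.log 32 :=
      Real.log_le_log (by norm_num) (by norm_num)
    have e27 : Real.log 27 = 3 * Real.log 3 := by
      rw [show (27:ℝ) = 3^3 by norm_num, Real.log_pow]; push_cast; ring
    have e32 : Real.log 32 = 5 * Real.log 2 := by
      rw [show (32:ℝ) = 2^5 by norm_num, Real.log_pow]; push_cast; ring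
    have hH3 : Hsum 3 = 5/6 := by
      unfold Hsum
      rw [show Finset.Icc 2 3 = {2, 3} by rfl]
      norm_num
    rw [hH3, div_le_iff₀ (by positivity)]
    nlinarith [h27]
  have key : ∀ t : ℕ, 3 ≤ t → Real.log t / (2 * Real.log 2) ≤ Hsum t := by
    intro t ht
    induction t, ht using Nat.le_induction with
    | base => norm_num at h3 ⊢; exact h3
    | succ t ht ih =>
      have htR : (3:ℝ) ≤ (t:ℝ) := by exact_mod_cast ht
      have ht0 : (0:ℝ) < (t:ℝ) := by linarith
      rw [Hsum_succ t (by omega)]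
      have hlog : Real.log ((t:ℝ)+1) - Real.log t ≤ 1 / (t:ℝ) := by
        have := Real.log_le_sub_one_of_pos
          (show (0:ℝ) < ((t:ℝ)+1)/(t:ℝ) by positivity)
        rw [Real.log_div (by linarith) (by linarith)] at this
        have : Real.log ((t:ℝ)+1) - Real.log t ≤ ((t:ℝ)+1)/(t:ℝ) - 1 := this
        calc Real.log ((t:ℝ)+1) - Real.log t ≤ ((t:ℝ)+1)/(t:ℝ) - 1 := this
          _ = 1/(t:ℝ) := by field_simp; ring
      have hfrac : 1/(t:ℝ) ≤ 2 * Real.log 2 / ((t:ℝ)+1) := by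
        rw [div_le_div_iff₀ ht0 (by linarith)]
        nlinarith
      push_cast
      have hstep : Real.log ((t:ℝ)+1) ≤ Real.log t + 2*Real.log 2/((t:ℝ)+1) := by
        linarith
      have : Real.log ((t:ℝ)+1) / (2*Real.log 2)
          ≤ Real.log t / (2*Real.log 2) + 1/((t:ℝ)+1) := by
        rw [div_le_iff₀ (by positivity)]
        have e : (Real.log t / (2*Real.log 2) + 1/((t:ℝ)+1)) * (2*Real.log 2)
            = Real.log t + (2*Real.log 2)/((t:ℝ)+1) := by
          field_simp
        rw [e]; exact hstep
      linarith
  intro t ht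
  match t, ht with
  | 1, _ => simp [Hsum_one]
  | 2, _ =>
      have hH2 : Hsum 2 = 1/2 := by
        unfold Hsum
        rw [show Finset.Icc 2 2 = {2} by rfl]
        norm_num
      rw [hH2]
      rw [div_le_iff₀ (by positivity)]
      norm_num
      nlinarith [Real.log_le_log (show (0:ℝ)<2 by norm_num) (show (2:ℝ) ≤ 2 by norm_num)]
  | (n+3), _ => exact key (n+3) (by omega)

/-- Theorem 1: boosting guarantee for the entropy criterion. -/
theorem boosting_entropy (k : ℕ) (hk : 2 ≤ k)
    (γ : ℝ) (hγ0 : 0 < γ) (hγhalf : γ ≤ 1/2)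
    (η : ℝ) (hη : η^2 = 8 * γ^2 / ((1 - γ)^2 * Real.log k))
    (G : ℕ → ℝ)
    (hG0 : ∀ t : ℕ, 1 ≤ t → 0 ≤ G t)
    (hG1 : G 1 ≤ 2 * Real.log k)
    (hrec : ∀ t : ℕ, 1 ≤ t → G (t+1) ≤ G t * (1 - η^2 / (16 * ((t : ℝ) + 1))))
    (α : ℝ) (hα0 : 0 < α) (hα : α ≤ 2 * Real.log k)
    (t : ℕ) (ht : 1 ≤ t) (hpow : ∃ s : ℕ, t + 1 = 2^s)
    (htbig : (t : ℝ) ≥ (2 * Real.log k / α) ^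
      (4 * (1 - γ)^2 * Real.log k / (γ^2 * Real.logb 2 (Real.exp 1)))) :
    G t ≤ α := by
  have l2 : (0:ℝ) < Real.log 2 := Real.log_pos (by norm_num)
  have hkR : (2:ℝ) ≤ (k:ℝ) := by exact_mod_cast hk
  have lk : (0:ℝ) < Real.log k := Real.log_pos (by linarith)
  have hγ1 : (0:ℝ) < 1 - γ := by linarith
  set c : ℝ := η^2 / 16 with hc
  have hcval : c = γ^2 / (2 * (1-γ)^2 * Real.log k) := by
    rw [hc, hη]; field_simp; ring
  have hc0 : 0 < c := by
    rw [hcval]; positivity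
  -- the pointwise entropy bound
  have main : ∀ s : ℕ, 1 ≤ s → G s ≤ 2 * Real.log k * Real.exp (-(c * Hsum s)) := by
    intro s hs
    induction s, hs using Nat.le_induction with
    | base => simpa [Hsum_one] using hG1
    | succ s hs ih =>
      have hGs := hG0 s hs
      have h1 : G (s+1) ≤ G s * (1 - c / ((s:ℝ)+1)) := by
        have := hrec s hs
        have e : η^2 / (16 * ((s:ℝ)+1)) = c / ((s:ℝ)+1) := by
          rw [hc, div_div]
        rwa [e] at this
      have h2 : (1 - c / ((s:ℝ)+1)) ≤ Real.exp (-(c / ((s:ℝ)+1))) := by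
        have := Real.add_one_le_exp (-(c / ((s:ℝ)+1)))
        linarith
      have h3 : G (s+1) ≤ G s * Real.exp (-(c / ((s:ℝ)+1))) :=
        h1.trans (mul_le_mul_of_nonneg_left h2 hGs)
      have h4 : G s * Real.exp (-(c / ((s:ℝ)+1)))
          ≤ (2 * Real.log k * Real.exp (-(c * Hsum s))) * Real.exp (-(c / ((s:ℝ)+1))) :=
        mul_le_mul_of_nonneg_right ih (Real.exp_nonneg _)
      have h5 : (2 * Real.log k * Real.exp (-(c * Hsum s))) * Real.exp (-(c / ((s:ℝ)+1)))
          = 2 * Real.log k * Real.exp (-(c * Hsum (s+1))) := by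
        rw [Hsum_succ s hs, mul_assoc, ← Real.exp_add]
        congr 1
        ring
      linarith [h3.trans (h4.trans_eq h5)]
  -- relate the exponent to c
  have hlogb : Real.logb 2 (Real.exp 1) = 1 / Real.log 2 := by
    rw [Real.logb, Real.log_exp]
  set E : ℝ := 4 * (1 - γ)^2 * Real.log k / (γ^2 * Real.logb 2 (Real.exp 1)) with hE
  have hEval : E = 4 * (1-γ)^2 * Real.log k * Real.log 2 / γ^2 := by
    rw [hE, hlogb]; field_simp
  have hE0 : 0 < E := by rw [hEval]; positivity
  have hcE : c * E = 2 * Real.log 2 := by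
    rw [hcval, hEval]
    field_simp
    ring
  -- take logs of the size hypothesis
  set x : ℝ := 2 * Real.log k / α with hx
  have hx0 : 0 < x := by rw [hx]; positivity
  have hx1 : 0 ≤ Real.log x := by
    apply Real.log_nonneg
    rw [hx, le_div_iff₀ hα0]; linarith
  have htpos : (0:ℝ) < (t:ℝ) := by exact_mod_cast ht
  have hlogt : E * Real.log x ≤ Real.log t := by
    have h := Real.log_le_log (Real.rpow_pos_of_pos hx0 E) htbig
    rwa [Real.log_rpow hx0] at h
  -- conclude
  have hH := log_le_Hsum t ht
  have hkey : Real.log x ≤ c * Hsum t := by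
    have h1 : c * (Real.log t / (2 * Real.log 2)) ≤ c * Hsum t :=
      mul_le_mul_of_nonneg_left hH hc0.le
    have h2 : Real.log x ≤ c * (Real.log t / (2 * Real.log 2)) := by
      rw [← mul_div_assoc, le_div_iff₀ (by positivity)]
      calc Real.log x * (2 * Real.log 2) = c * (E * Real.log x) := by rw [← hcE]; ring
        _ ≤ c * Real.log t := mul_le_mul_of_nonneg_left hlogt hc0.le
    exact h2.trans h1
  have hGt := main t ht
  have hfin : 2 * Real.log k * Real.exp (-(c * Hsum t)) ≤ α := by
    have hexp : Real.exp (-(c * Hsum t)) ≤ Real.exp (-Real.log x) :=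
      Real.exp_le_exp.mpr (by linarith)
    have : 2 * Real.log k * Real.exp (-(c * Hsum t))
        ≤ 2 * Real.log k * Real.exp (-Real.log x) :=
      mul_le_mul_of_nonneg_left hexp (by positivity)
    have e : 2 * Real.log k * Real.exp (-Real.log x) = α := by
      rw [Real.exp_neg, Real.exp_log hx0, hx]
      field_simp
    linarith
  exact hGt.trans hfin
end

section
/- (Theorem 2, boosting for the Gini-entropy criterion, in the form established by the paper's proof.) Fix an integer k ≥ 2 and γ ∈ (0, 1/2], and set η^2 = 16*γ^2 / ((1-γ)^2 * (k-1)). Let G : ℕ → ℝ satisfy G t ≥ 0 for all t ≥ 1, G 1 ≤ 2 * (1 - 1/k), and G (t+1) ≤ G t * (1 - η^2 / (16 * (t+1))) for all t ≥ 1. Then for every α ∈ (0, 2 * (1 - 1/k)] and every t ≥ 1 such that t+1 is a power of 2 and t ≥ (2 * (1 - 1/k) / α) ^ (2 * (1-γ)^2 * (k-1) / (γ^2 * Real.logb 2 (Real.exp 1))), one has G t ≤ α. -/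
open Finset

lemma gini_prod_bound (c : ℝ) (hc1 : c ≤ 1)
    (G : ℕ → ℝ) (B : ℝ) (hG1 : G 1 ≤ B)
    (hrec : ∀ t : ℕ, 1 ≤ t → G (t+1) ≤ G t * (1 - c / ((t:ℝ)+1))) :
    ∀ t : ℕ, 1 ≤ t → G t ≤ B * ∏ j ∈ Icc 2 t, (1 - c / (j:ℝ)) := by
  intro t ht
  induction t with
  | zero => omega
  | succ n ih =>
    rcases Nat.lt_or_ge 1 (n+1) with h | h
    · have hn : 1 ≤ n := by omega
      have hfac : 0 ≤ 1 - c / ((n:ℝ)+1) := by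
        have h2 : (1:ℝ) ≤ (n:ℝ) + 1 := by
          have : (1:ℝ) ≤ (n:ℝ) := by exact_mod_cast hn
          linarith
        have : c / ((n:ℝ)+1) ≤ 1 := by
          rw [div_le_one (by linarith)]; linarith
        linarith
      calc G (n+1) ≤ G n * (1 - c/((n:ℝ)+1)) := hrec n hn
        _ ≤ (B * ∏ j ∈ Icc 2 n, (1 - c/(j:ℝ))) * (1 - c/((n:ℝ)+1)) :=
            mul_le_mul_of_nonneg_right (ih hn) hfac
        _ = B * ∏ j ∈ Icc 2 (n+1), (1 - c/(j:ℝ)) := by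
            rw [Finset.prod_Icc_succ_top (by omega)]
            push_cast; ring
    · have hn1 : n = 0 := by omega
      subst hn1
      simpa using hG1

lemma gini_harmonic (t : ℕ) (ht : 1 ≤ t) :
    Real.log ((t:ℝ)+1) - Real.log 2 ≤ ∑ j ∈ Icc 2 t, (1 / (j:ℝ)) := by
  induction t with
  | zero => omega
  | succ n ih =>
    rcases Nat.lt_or_ge 1 (n+1) with h | h
    · have hn : 1 ≤ n := by omega
      rw [Finset.sum_Icc_succ_top (by omega)]
      have hpos1 : (0:ℝ) < (n:ℝ) + 1 := by positivity
      have key : Real.log ((n:ℝ)+2) - Real.log ((n:ℝ)+1) ≤ 1 / ((n:ℝ)+1) := by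
        rw [← Real.log_div (by positivity) (by positivity)]
        have h1 := Real.log_le_sub_one_of_pos
          (show (0:ℝ) < ((n:ℝ)+2)/((n:ℝ)+1) by positivity)
        have h2 : ((n:ℝ)+2)/((n:ℝ)+1) - 1 = 1/((n:ℝ)+1) := by
          field_simp
          norm_num
        linarith
      have h3 := ih hn
      have h21 : ((n:ℝ)+2) = ((n:ℝ)+1+1) := by ring
      rw [h21] at key
      push_cast
      push_cast at h3
      linarith
    · have hn1 : n = 0 := by omega
      subst hn1
      norm_num

lemma gini_harmonic_pow (t s : ℕ) (ht : 1 ≤ t) (hs : t + 1 = 2^s) :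
    Real.log (t:ℝ) / (2 * Real.log 2) ≤ ∑ j ∈ Icc 2 t, (1/(j:ℝ)) := by
  have hlog2 : (0.6931471803 : ℝ) < Real.log 2 := Real.log_two_gt_d9
  rcases Nat.lt_or_ge s 4 with hs4 | hs4
  · interval_cases s
    · omega
    · -- t = 1
      have : t = 1 := by omega
      subst this
      norm_num
    · -- t = 3
      have : t = 3 := by omega
      subst this
      have h27 : Real.log ((3:ℝ)^3) ≤ Real.log ((2:ℝ)^5) := by
        apply Real.log_le_log (by norm_num) (by norm_num)
      rw [Real.log_pow, Real.log_pow] at h27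
      have hsum : ∑ j ∈ Icc (2:ℕ) 3, (1/(j:ℝ)) = 5/6 := by
        rw [show Icc (2:ℕ) 3 = {2, 3} by decide]
        norm_num
      rw [hsum, div_le_iff₀ (by positivity)]
      push_cast at h27 ⊢
      nlinarith
    · -- t = 7
      have : t = 7 := by omega
      subst this
      have h7 : Real.log ((7:ℝ)^70) ≤ Real.log ((2:ℝ)^223) := by
        apply Real.log_le_log (by positivity) (by norm_num)
      rw [Real.log_pow, Real.log_pow] at h7
      have hsum : ∑ j ∈ Icc (2:ℕ) 7, (1/(j:ℝ)) = 223/140 := by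
        rw [show Icc (2:ℕ) 7 = {2, 3, 4, 5, 6, 7} by decide]
        norm_num [Finset.sum_insert, Finset.mem_insert]
      rw [hsum, div_le_iff₀ (by positivity)]
      push_cast at h7 ⊢
      nlinarith
  · have h1 := gini_harmonic t ht
    have htp : ((t:ℝ)+1) = 2^s := by exact_mod_cast congrArg (Nat.cast : ℕ → ℝ) hs
    have hlogt1 : Real.log ((t:ℝ)+1) = s * Real.log 2 := by
      rw [htp, Real.log_pow]
    have hlt : Real.log (t:ℝ) ≤ s * Real.log 2 := by
      rw [← hlogt1]
      apply Real.log_le_log (by exact_mod_cast ht)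
      linarith
    have hsr : (4:ℝ) ≤ (s:ℝ) := by exact_mod_cast hs4
    have : Real.log (t:ℝ) / (2 * Real.log 2) ≤ Real.log ((t:ℝ)+1) - Real.log 2 := by
      rw [hlogt1, div_le_iff₀ (by positivity)]
      have hL : (0:ℝ) < Real.log 2 := by linarith
      have hA : (0:ℝ) ≤ ((s:ℝ) - 4) * (2 * Real.log 2 - 1) * Real.log 2 :=
        mul_nonneg (mul_nonneg (by linarith) (by linarith)) hL.le
      have hBt : (0:ℝ) ≤ Real.log 2 * (3 * Real.log 2 - 2) :=
        mul_nonneg hL.le (by linarith)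
      nlinarith [hA, hBt, hlt]
    linarith

/-- Theorem 2: boosting guarantee for the Gini-entropy criterion. -/
theorem boosting_gini (k : ℕ) (hk : 2 ≤ k)
    (γ : ℝ) (hγ0 : 0 < γ) (hγhalf : γ ≤ 1/2)
    (η : ℝ) (hη : η^2 = 16 * γ^2 / ((1 - γ)^2 * ((k : ℝ) - 1)))
    (G : ℕ → ℝ)
    (hG0 : ∀ t : ℕ, 1 ≤ t → 0 ≤ G t)
    (hG1 : G 1 ≤ 2 * (1 - 1 / (k : ℝ)))
    (hrec : ∀ t : ℕ, 1 ≤ t → G (t+1) ≤ G t * (1 - η^2 / (16 * ((t : ℝ) + 1))))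
    (α : ℝ) (hα0 : 0 < α) (hα : α ≤ 2 * (1 - 1 / (k : ℝ)))
    (t : ℕ) (ht : 1 ≤ t) (hpow : ∃ s : ℕ, t + 1 = 2^s)
    (htbig : (t : ℝ) ≥ (2 * (1 - 1 / (k : ℝ)) / α) ^
      (2 * (1 - γ)^2 * ((k : ℝ) - 1) / (γ^2 * Real.logb 2 (Real.exp 1)))) :
    G t ≤ α := by
  obtain ⟨s, hs⟩ := hpow
  set B : ℝ := 2 * (1 - 1 / (k : ℝ)) with hB
  have hk2 : (2:ℝ) ≤ (k:ℝ) := by exact_mod_cast hk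
  have hk1 : (1:ℝ) ≤ (k:ℝ) - 1 := by linarith
  have h1γ : (0:ℝ) < 1 - γ := by linarith
  set c : ℝ := γ^2 / ((1 - γ)^2 * ((k:ℝ) - 1)) with hc
  have hc0 : 0 < c := by
    apply div_pos (by positivity) (by positivity)
  have hc1 : c ≤ 1 := by
    rw [hc, div_le_one (by positivity)]
    nlinarith
  have hη16 : η^2 = 16 * c := by rw [hη, hc]; ring
  have hrec' : ∀ u : ℕ, 1 ≤ u → G (u+1) ≤ G u * (1 - c / ((u:ℝ)+1)) := by
    intro u hu
    have := hrec u hu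
    have heq : η^2 / (16 * ((u:ℝ)+1)) = c / ((u:ℝ)+1) := by
      rw [hη16, mul_div_mul_left _ _ (by norm_num : (16:ℝ) ≠ 0)]
    rwa [heq] at this
  have hB1 : (1:ℝ) ≤ B := by
    rw [hB]
    have : 1/(k:ℝ) ≤ 1/2 := by
      apply one_div_le_one_div_of_le <;> linarith
    linarith
  have hB0 : (0:ℝ) < B := by linarith
  -- the exponent equals 2 log 2 / c
  have hlogb : Real.logb 2 (Real.exp 1) = 1 / Real.log 2 := by
    rw [Real.logb, Real.log_exp]
  have hlog2pos : (0:ℝ) < Real.log 2 := Real.log_pos (by norm_num)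
  set E : ℝ := 2 * (1 - γ)^2 * ((k : ℝ) - 1) / (γ^2 * Real.logb 2 (Real.exp 1)) with hE
  have hEeq : E = 2 * Real.log 2 / c := by
    rw [hE, hlogb, hc]
    field_simp
  have hE0 : 0 < E := by
    rw [hEeq]; positivity
  -- log t ≥ E * log (B/α)
  have hBα1 : (1:ℝ) ≤ B / α := by
    rw [le_div_iff₀ hα0]; linarith
  have hBα0 : (0:ℝ) < B / α := by linarith
  have hlogt : E * Real.log (B / α) ≤ Real.log (t:ℝ) := by
    have h1 : Real.log ((B/α) ^ E) ≤ Real.log (t:ℝ) :=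
      Real.log_le_log (Real.rpow_pos_of_pos hBα0 E) htbig
    rwa [Real.log_rpow hBα0] at h1
  -- harmonic sum bound
  have hH := gini_harmonic_pow t s ht hs
  set H : ℝ := ∑ j ∈ Icc 2 t, (1/(j:ℝ)) with hHdef
  have hkey : Real.log (B / α) ≤ c * H := by
    have h2 : Real.log (B/α) = c / (2 * Real.log 2) * (E * Real.log (B/α)) := by
      rw [hEeq]
      field_simp
    rw [h2]
    calc c / (2 * Real.log 2) * (E * Real.log (B/α))
        ≤ c / (2 * Real.log 2) * Real.log (t:ℝ) := by
          apply mul_le_mul_of_nonneg_left hlogt (by positivity)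
      _ = c * (Real.log (t:ℝ) / (2 * Real.log 2)) := by ring
      _ ≤ c * H := by
          apply mul_le_mul_of_nonneg_left hH (le_of_lt hc0)
  -- product bound
  have hprod := gini_prod_bound c hc1 G B hG1 hrec' t ht
  have hprodexp : (∏ j ∈ Icc 2 t, (1 - c / (j:ℝ))) ≤ Real.exp (-(c * H)) := by
    have h1 : (∏ j ∈ Icc 2 t, (1 - c / (j:ℝ))) ≤ ∏ j ∈ Icc 2 t, Real.exp (-(c / (j:ℝ))) := by
      apply Finset.prod_le_prod
      · intro j hj
        simp only [Finset.mem_Icc] at hj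
        have hj2 : (2:ℝ) ≤ (j:ℝ) := by exact_mod_cast hj.1
        have : c / (j:ℝ) ≤ 1 := by
          rw [div_le_one (by linarith)]; linarith
        linarith
      · intro j hj
        have := Real.add_one_le_exp (-(c / (j:ℝ)))
        linarith
    rw [← Real.exp_sum] at h1
    have h2 : ∑ j ∈ Icc 2 t, -(c / (j:ℝ)) = -(c * H) := by
      rw [hHdef, Finset.mul_sum, ← Finset.sum_neg_distrib]
      apply Finset.sum_congr rfl
      intro j _
      ring
    rwa [h2] at h1
  have hfin : G t ≤ B * Real.exp (-(c * H)) := by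
    calc G t ≤ B * ∏ j ∈ Icc 2 t, (1 - c / (j:ℝ)) := hprod
      _ ≤ B * Real.exp (-(c * H)) := by
          apply mul_le_mul_of_nonneg_left hprodexp (le_of_lt hB0)
  have hexp : Real.exp (-(c * H)) ≤ Real.exp (-(Real.log (B/α))) :=
    Real.exp_le_exp.mpr (by linarith)
  have hfinal : B * Real.exp (-(Real.log (B/α))) = α := by
    rw [Real.exp_neg, Real.exp_log hBα0]
    field_simp
  calc G t ≤ B * Real.exp (-(c * H)) := hfin
    _ ≤ B * Real.exp (-(Real.log (B/α))) :=
        mul_le_mul_of_nonneg_left hexp (le_of_lt hB0)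
    _ = α := hfinal
end

section
/- (Theorem 3, boosting for the modified Gini-entropy criterion, in the form established by the paper's proof.) Fix an integer k ≥ 2, γ ∈ (0, 1/2], and a real constant C > 2, and set η^2 = 16*γ^2*(C-2)^2 / ((1-γ)^2 * C^3 * k * Real.sqrt (k*C - 1)). Let G : ℕ → ℝ satisfy G t ≥ 0 for all t ≥ 1, G 1 ≤ 2 * Real.sqrt (k*C - 1), and G (t+1) ≤ G t * (1 - η^2 / (16 * (t+1))) for all t ≥ 1. Then for every α ∈ [Real.sqrt (C-1), 2 * Real.sqrt (k*C - 1)] and every t ≥ 1 such that t+1 is a power of 2 and t ≥ (2 * Real.sqrt (k*C - 1) / α) ^ (2 * (1-γ)^2 * C^3 * k * Real.sqrt (k*C - 1) / (γ^2 * (C-2)^2 * Real.logb 2 (Real.exp 1))), one has G t ≤ α. -/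
/-- Harmonic-type lower bound: `log t ≤ 2 log 2 * (H_t - 1)` for `t ≥ 1`. -/
private lemma harmonic_log_lb (t : ℕ) (ht : 1 ≤ t) :
    Real.log t ≤ 2 * Real.log 2 * ∑ j ∈ Finset.Icc 2 t, (1 : ℝ) / j := by
  induction t, ht using Nat.le_induction with
  | base => simp
  | succ t ht ih =>
    rw [Finset.sum_Icc_succ_top (by omega : 2 ≤ t + 1)]
    push_cast
    match t, ht with
    | 1, _ =>
      norm_num
      linarith
    | 2, _ =>
      norm_num
      have h3 : Real.log 3 = Real.log 27 / 3 := by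
        rw [show (27:ℝ) = 3 ^ (3:ℕ) by norm_num, Real.log_pow]
        ring
      have h2 : Real.log 32 = 5 * Real.log 2 := by
        rw [show (32:ℝ) = 2 ^ (5:ℕ) by norm_num, Real.log_pow]
        ring
      have hle : Real.log 27 ≤ Real.log 32 :=
        Real.log_le_log (by norm_num) (by norm_num)
      rw [h3]
      rw [h2] at hle
      linarith
    | (m+3), _ =>
      set s : ℕ := m + 3 with hs
      have hsge : (3:ℝ) ≤ (s:ℝ) := by exact_mod_cast Nat.le_add_left 3 m
      have hspos : (0:ℝ) < (s:ℝ) := by linarith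
      have ihs := ih
      have hlogstep : Real.log ((s:ℝ) + 1) - Real.log s ≤ 1 / s := by
        rw [← Real.log_div (by linarith) (by linarith)]
        have := Real.log_le_sub_one_of_pos
          (show (0:ℝ) < ((s:ℝ)+1)/s by positivity)
        have heq : ((s:ℝ)+1)/s - 1 = 1/s := by field_simp; ring
        linarith
      have hlog2 : (0.6931471803 : ℝ) < Real.log 2 := Real.log_two_gt_d9
      have hkey : 1 / (s:ℝ) ≤ 2 * Real.log 2 * (1 / ((s:ℝ)+1)) := by
        have hstep : (2 * Real.log 2 - 1) * 3 ≤ (2 * Real.log 2 - 1) * s :=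
          mul_le_mul_of_nonneg_left hsge (by nlinarith)
        rw [mul_one_div, div_le_div_iff₀ hspos (by linarith : (0:ℝ) < (s:ℝ)+1)]
        nlinarith
      have : Real.log ((s:ℝ)+1) ≤ Real.log s + 2 * Real.log 2 * (1/((s:ℝ)+1)) := by
        linarith
      calc Real.log ((s:ℝ)+1)
          ≤ Real.log s + 2 * Real.log 2 * (1/((s:ℝ)+1)) := this
        _ ≤ 2 * Real.log 2 * (∑ j ∈ Finset.Icc 2 s, (1:ℝ)/j)
              + 2 * Real.log 2 * (1/((s:ℝ)+1)) := by linarith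
        _ = 2 * Real.log 2 * ((∑ j ∈ Finset.Icc 2 s, (1:ℝ)/j) + 1/((s:ℝ)+1)) := by ring

set_option maxHeartbeats 1000000 in
/-- Theorem 3: boosting guarantee for the modified Gini-entropy criterion. -/
theorem boosting_modified_gini (k : ℕ) (hk : 2 ≤ k)
    (γ : ℝ) (hγ0 : 0 < γ) (hγhalf : γ ≤ 1/2)
    (C : ℝ) (hC : 2 < C)
    (η : ℝ) (hη : η^2 = 16 * γ^2 * (C - 2)^2 /
      ((1 - γ)^2 * C^3 * (k : ℝ) * Real.sqrt ((k : ℝ) * C - 1)))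
    (G : ℕ → ℝ)
    (hG0 : ∀ t : ℕ, 1 ≤ t → 0 ≤ G t)
    (hG1 : G 1 ≤ 2 * Real.sqrt ((k : ℝ) * C - 1))
    (hrec : ∀ t : ℕ, 1 ≤ t → G (t+1) ≤ G t * (1 - η^2 / (16 * ((t : ℝ) + 1))))
    (α : ℝ) (hαlo : Real.sqrt (C - 1) ≤ α) (hαhi : α ≤ 2 * Real.sqrt ((k : ℝ) * C - 1))
    (t : ℕ) (ht : 1 ≤ t) (hpow : ∃ s : ℕ, t + 1 = 2^s)
    (htbig : (t : ℝ) ≥ (2 * Real.sqrt ((k : ℝ) * C - 1) / α) ^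
      (2 * (1 - γ)^2 * C^3 * (k : ℝ) * Real.sqrt ((k : ℝ) * C - 1) /
        (γ^2 * (C - 2)^2 * Real.logb 2 (Real.exp 1)))) :
    G t ≤ α := by
  have hk2 : (2:ℝ) ≤ (k:ℝ) := by exact_mod_cast hk
  have hCpos : (0:ℝ) < C := by linarith
  have hkC : (3:ℝ) ≤ (k:ℝ) * C - 1 := by nlinarith
  have hsq1 : (1:ℝ) ≤ Real.sqrt ((k:ℝ) * C - 1) := by
    nlinarith [Real.sq_sqrt (show (0:ℝ) ≤ (k:ℝ)*C - 1 by linarith),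
      Real.sqrt_nonneg ((k:ℝ)*C - 1)]
  have hsqpos : (0:ℝ) < Real.sqrt ((k:ℝ) * C - 1) := by linarith
  have hBpos : (0:ℝ) < 2 * Real.sqrt ((k:ℝ) * C - 1) := by linarith
  have hαpos : (0:ℝ) < α := by
    have : (0:ℝ) < Real.sqrt (C - 1) := Real.sqrt_pos.mpr (by linarith)
    linarith
  have h1γ : (0:ℝ) < 1 - γ := by linarith
  have hDpos : (0:ℝ) < (1 - γ)^2 * C^3 * (k:ℝ) * Real.sqrt ((k:ℝ) * C - 1) := by
    have hkpos : (0:ℝ) < (k:ℝ) := by linarith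
    positivity
  set A : ℝ := η^2 / 16 with hA
  have hAval : A = γ^2 * (C - 2)^2 /
      ((1 - γ)^2 * C^3 * (k:ℝ) * Real.sqrt ((k:ℝ) * C - 1)) := by
    rw [hA, hη]; ring
  have hApos : (0:ℝ) < A := by
    rw [hAval]
    apply div_pos _ hDpos
    have : (0:ℝ) < C - 2 := by linarith
    positivity
  have hA1 : A ≤ 1 := by
    rw [hAval, div_le_one hDpos]
    have h1 : γ^2 ≤ (1 - γ)^2 := by nlinarith
    have h2 : (C - 2)^2 ≤ C^3 := by nlinarith [mul_pos hCpos hCpos, sq_nonneg C]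
    have h3 : (1:ℝ) ≤ (k:ℝ) * Real.sqrt ((k:ℝ) * C - 1) := by nlinarith
    calc γ^2 * (C-2)^2 ≤ (1-γ)^2 * (C-2)^2 :=
          mul_le_mul_of_nonneg_right h1 (sq_nonneg _)
      _ ≤ (1-γ)^2 * C^3 := mul_le_mul_of_nonneg_left h2 (sq_nonneg _)
      _ = (1-γ)^2 * C^3 * 1 := by ring
      _ ≤ (1-γ)^2 * C^3 * ((k:ℝ) * Real.sqrt ((k:ℝ)*C - 1)) := by
          apply mul_le_mul_of_nonneg_left h3
          positivity
      _ = (1-γ)^2 * C^3 * (k:ℝ) * Real.sqrt ((k:ℝ)*C - 1) := by ring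
  -- key decay bound
  have key : ∀ n : ℕ, 1 ≤ n → G n ≤ 2 * Real.sqrt ((k:ℝ) * C - 1) *
      Real.exp (-(A * ∑ j ∈ Finset.Icc 2 n, (1:ℝ)/j)) := by
    intro n hn
    induction n, hn using Nat.le_induction with
    | base => simpa using hG1
    | succ n hn ih =>
      have hn1 : (1:ℝ) ≤ (n:ℝ) + 1 := by
        have : (0:ℝ) ≤ (n:ℝ) := Nat.cast_nonneg n
        linarith
      have hn1ne : ((n:ℝ) + 1) ≠ 0 := by linarith
      have hfac : η^2 / (16 * ((n:ℝ) + 1)) = A / ((n:ℝ) + 1) := by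
        rw [hA, div_div]
      have hfle : A / ((n:ℝ) + 1) ≤ A := div_le_self hApos.le hn1
      have h0 : (0:ℝ) ≤ 1 - A / ((n:ℝ) + 1) := by linarith
      have hexp : 1 - A / ((n:ℝ) + 1) ≤ Real.exp (-(A / ((n:ℝ) + 1))) := by
        have := Real.add_one_le_exp (-(A / ((n:ℝ) + 1)))
        linarith
      calc G (n+1) ≤ G n * (1 - A / ((n:ℝ) + 1)) := by
            rw [← hfac]; exact hrec n hn
        _ ≤ (2 * Real.sqrt ((k:ℝ)*C - 1) *
              Real.exp (-(A * ∑ j ∈ Finset.Icc 2 n, (1:ℝ)/j))) *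
              (1 - A / ((n:ℝ) + 1)) := mul_le_mul_of_nonneg_right ih h0
        _ ≤ (2 * Real.sqrt ((k:ℝ)*C - 1) *
              Real.exp (-(A * ∑ j ∈ Finset.Icc 2 n, (1:ℝ)/j))) *
              Real.exp (-(A / ((n:ℝ) + 1))) := by
            apply mul_le_mul_of_nonneg_left hexp
            positivity
        _ = 2 * Real.sqrt ((k:ℝ)*C - 1) *
              Real.exp (-(A * ∑ j ∈ Finset.Icc 2 (n+1), (1:ℝ)/j)) := by
            rw [Finset.sum_Icc_succ_top (by omega : 2 ≤ n + 1), mul_assoc,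
              ← Real.exp_add]
            congr 2
            push_cast
            ring
  -- combine
  have hS := harmonic_log_lb t ht
  set S : ℝ := ∑ j ∈ Finset.Icc 2 t, (1:ℝ)/j with hSdef
  have hRpos : (0:ℝ) < 2 * Real.sqrt ((k:ℝ)*C - 1) / α := by positivity
  have hR1 : (1:ℝ) ≤ 2 * Real.sqrt ((k:ℝ)*C - 1) / α := (one_le_div hαpos).mpr hαhi
  set R : ℝ := 2 * Real.sqrt ((k:ℝ)*C - 1) / α with hRdef
  have hlog2pos : (0:ℝ) < Real.log 2 := Real.log_pos (by norm_num)
  have hlogb : Real.logb 2 (Real.exp 1) = 1 / Real.log 2 := by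
    rw [Real.logb, Real.log_exp]
  have hE : 2 * (1 - γ)^2 * C^3 * (k:ℝ) * Real.sqrt ((k:ℝ) * C - 1) /
      (γ^2 * (C - 2)^2 * Real.logb 2 (Real.exp 1)) = 2 * Real.log 2 / A := by
    rw [hlogb, hAval]
    have hC2 : C - 2 ≠ 0 := by linarith
    have hγne : γ ≠ 0 := ne_of_gt hγ0
    have h1γne : (1:ℝ) - γ ≠ 0 := ne_of_gt h1γ
    have hCne : C ≠ 0 := ne_of_gt hCpos
    have hkne : (k:ℝ) ≠ 0 := by positivity
    have hsne : Real.sqrt ((k:ℝ)*C - 1) ≠ 0 := ne_of_gt hsqpos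
    field_simp
  rw [hE] at htbig
  have hRE : (0:ℝ) < R ^ (2 * Real.log 2 / A) := Real.rpow_pos_of_pos hRpos _
  have hlogt : 2 * Real.log 2 / A * Real.log R ≤ Real.log t := by
    have h1 : Real.log (R ^ (2 * Real.log 2 / A)) ≤ Real.log t :=
      Real.log_le_log hRE htbig
    rwa [Real.log_rpow hRpos] at h1
  have hlogR : (0:ℝ) ≤ Real.log R := Real.log_nonneg hR1
  have hAS : Real.log R ≤ A * S := by
    have h2 : 2 * Real.log 2 / A * Real.log R ≤ 2 * Real.log 2 * S := le_trans hlogt hS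
    have hAne : A ≠ 0 := ne_of_gt hApos
    have hlne : (2 : ℝ) * Real.log 2 ≠ 0 := by positivity
    have h3 := mul_le_mul_of_nonneg_left h2
      (div_nonneg hApos.le (by positivity : (0:ℝ) ≤ 2 * Real.log 2))
    have e1 : A / (2 * Real.log 2) * (2 * Real.log 2 / A * Real.log R)
        = Real.log R := by field_simp
    have e2 : A / (2 * Real.log 2) * (2 * Real.log 2 * S) = A * S := by
      field_simp
    rw [e1, e2] at h3
    exact h3
  calc G t ≤ 2 * Real.sqrt ((k:ℝ)*C - 1) * Real.exp (-(A * S)) := key t ht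
    _ ≤ 2 * Real.sqrt ((k:ℝ)*C - 1) * Real.exp (-Real.log R) := by
        apply mul_le_mul_of_nonneg_left _ hBpos.le
        exact Real.exp_le_exp.mpr (by linarith)
    _ = α := by
        rw [Real.exp_neg, Real.exp_log hRpos, hRdef]
        field_simp
end
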